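/- arXiv:2311.15910 — 3 statements merged into one kernel-verified Lean document; each statement's English description precedes it below -/
import Mathlib

section
/- Let n ≥ 2 be an integer, K a field, and R_n the rose graph with n petals. For every p ∈ A_{R_n}(e_1, e_2) ∩ L_K(R_n)_0, the K-algebra homomorphism θ_p : L_K(R_n) → L_K(R_n)^{φ_{U_p}} defined by θ_p(v) = v, θ_p(e_i) = e_i for all 1 ≤ i ≤ n, θ_p(e_j*) = e_j* for all 2 ≤ j ≤ n, and θ_p(e_1*) = e_1* + p e_2*, is an isomorphism. -/
/-- Generators of the Leavitt path algebra of the rose with `n` petals: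
the edges `e_1, …, e_n` and the ghost edges `e_1*, …, e_n*` (the single vertex `v` is the
identity `1`). -/
inductive RGen (n : ℕ) : Type
  | e : Fin n → RGen n
  | g : Fin n → RGen n

/-- The defining relations of `L_K(R_n)`: `e_i* e_j = δ_{ij} v` and `Σ_i e_i e_i* = v`,
where `v = 1`. -/
inductive RoseRel (K : Type) [Field K] (n : ℕ) :
    FreeAlgebra K (RGen n) → FreeAlgebra K (RGen n) → Prop
  | ghostEdgeSame (i : Fin n) :
      RoseRel K n (FreeAlgebra.ι K (RGen.g i) * FreeAlgebra.ι K (RGen.e i)) 1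
  | ghostEdgeNe (i j : Fin n) (h : i ≠ j) :
      RoseRel K n (FreeAlgebra.ι K (RGen.g i) * FreeAlgebra.ι K (RGen.e j)) 0
  | ck2 :
      RoseRel K n (∑ i : Fin n, FreeAlgebra.ι K (RGen.e i) * FreeAlgebra.ι K (RGen.g i)) 1

/-- The Leavitt path algebra `L_K(R_n)` of the rose with `n` petals. -/
abbrev LRose (K : Type) [Field K] (n : ℕ) : Type := RingQuot (RoseRel K n)

/-- The edge `e_i` as an element of `L_K(R_n)`. -/
noncomputable def ee (K : Type) [Field K] (n : ℕ) (i : Fin n) : LRose K n :=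
  RingQuot.mkAlgHom K (RoseRel K n) (FreeAlgebra.ι K (RGen.e i))

/-- The ghost edge `e_i*` as an element of `L_K(R_n)`. -/
noncomputable def gg (K : Type) [Field K] (n : ℕ) (i : Fin n) : LRose K n :=
  RingQuot.mkAlgHom K (RoseRel K n) (FreeAlgebra.ι K (RGen.g i))

/-- The degree `d` component of the ℤ-grading of `L_K(R_n)`: the `K`-span of the
elements `p q*` with `|p| - |q| = d`. -/
noncomputable def rComponent (K : Type) [Field K] (n : ℕ) (d : ℤ) :
    Submodule K (LRose K n) :=
  Submodule.span K {x : LRose K n | ∃ p q : List (Fin n),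
    (p.length : ℤ) - (q.length : ℤ) = d ∧
    x = (p.map (ee K n)).prod * (q.reverse.map (gg K n)).prod}

/-- A map is graded when it preserves every homogeneous component. -/
def RGraded (K : Type) [Field K] (n : ℕ) (f : LRose K n → LRose K n) : Prop :=
  ∀ d : ℤ, ∀ x ∈ rComponent K n d, f x ∈ rComponent K n d

/-- The defining property of the endomorphism `φ_P` of `L_K(R_n)` attached to a matrix
`P` with inverse `P'`: it sends `e_i ↦ Σ_k e_k p_{k i}` and `e_i* ↦ Σ_k p'_{i k} e_k*`
(and `v = 1 ↦ 1` automatically). -/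
def RPhiProps (K : Type) [Field K] (n : ℕ) (P P' : Matrix (Fin n) (Fin n) (LRose K n))
    (φ : LRose K n →ₐ[K] LRose K n) : Prop :=
  (∀ i, φ (ee K n i) = ∑ k, ee K n k * P k i) ∧
  (∀ i, φ (gg K n i) = ∑ k, P' i k * gg K n k)

/-- The subalgebra `A_{R_n}(e_1, e_2)` of `L_K(R_n)`, generated by
`v (= 1), e_1, e_3, …, e_n, e_2*, …, e_n*` (with `0`-based indices: all `e_i` with
`i ≠ 1` and all `e_j*` with `j ≠ 0`). -/
noncomputable def roseA (K : Type) [Field K] (n : ℕ) : Subalgebra K (LRose K n) :=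
  Algebra.adjoin K
    {x : LRose K n | (∃ i : Fin n, (i : ℕ) ≠ 1 ∧ x = ee K n i) ∨
      (∃ j : Fin n, (j : ℕ) ≠ 0 ∧ x = gg K n j)}

namespace S16

variable (K : Type) [Field K] (n : ℕ)

/-- letter value -/
noncomputable def lv : RGen n → LRose K n
  | .e i => ee K n i
  | .g j => gg K n j

/-- word value -/
noncomputable def wv (l : List (RGen n)) : LRose K n := (l.map (lv K n)).prod

def ld : RGen n → ℤ
  | .e _ => 1
  | .g _ => -1

def wd (l : List (RGen n)) : ℤ := (l.map (ld n)).sum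

@[simp] lemma wv_nil : wv K n [] = 1 := rfl
@[simp] lemma wv_cons (x : RGen n) (l : List (RGen n)) :
    wv K n (x :: l) = lv K n x * wv K n l := by simp [wv]
lemma wv_append (l l' : List (RGen n)) :
    wv K n (l ++ l') = wv K n l * wv K n l' := by simp [wv]
@[simp] lemma wd_nil : wd n [] = 0 := rfl
@[simp] lemma wd_cons (x : RGen n) (l : List (RGen n)) :
    wd n (x :: l) = ld n x + wd n l := by simp [wd]

@[simp] lemma lv_e (i : Fin n) : lv K n (RGen.e i) = ee K n i := rfl
@[simp] lemma lv_g (j : Fin n) : lv K n (RGen.g j) = gg K n j := rfl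

lemma rel1 (i : Fin n) : gg K n i * ee K n i = 1 := by
  have h := RingQuot.mkAlgHom_rel K (RoseRel.ghostEdgeSame (K := K) (n := n) i)
  simpa [gg, ee, map_mul, map_one] using h

lemma rel2 {i j : Fin n} (h : i ≠ j) : gg K n i * ee K n j = 0 := by
  have h' := RingQuot.mkAlgHom_rel K (RoseRel.ghostEdgeNe (K := K) (n := n) i j h)
  simpa [gg, ee, map_mul, map_zero] using h'

lemma rel3 : (∑ i : Fin n, ee K n i * gg K n i) = 1 := by
  have h := RingQuot.mkAlgHom_rel K (RoseRel.ck2 (K := K) (n := n))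
  simpa [gg, ee, map_sum, map_mul, map_one] using h

lemma geh (i : Fin n) (a : LRose K n) : gg K n i * (ee K n i * a) = a := by
  rw [← mul_assoc, rel1, one_mul]

lemma gehne {i j : Fin n} (h : i ≠ j) (a : LRose K n) :
    gg K n i * (ee K n j * a) = 0 := by
  rw [← mul_assoc, rel2 K n h, zero_mul]

/-- the span of all words -/
noncomputable def spanW : Submodule K (LRose K n) :=
  Submodule.span K (Set.range (wv K n))

lemma wv_mem_spanW (l : List (RGen n)) : wv K n l ∈ spanW K n :=
  Submodule.subset_span ⟨l, rfl⟩

lemma spanW_mul {a b : LRose K n} (ha : a ∈ spanW K n) (hb : b ∈ spanW K n) :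
    a * b ∈ spanW K n := by
  induction ha using Submodule.span_induction with
  | mem x hx =>
    obtain ⟨l, rfl⟩ := hx
    induction hb using Submodule.span_induction with
    | mem y hy =>
      obtain ⟨l', rfl⟩ := hy
      rw [← wv_append]; exact wv_mem_spanW K n _
    | zero => simpa using (spanW K n).zero_mem
    | add y z _ _ hy hz => rw [mul_add]; exact add_mem hy hz
    | smul c y _ hy => rw [mul_smul_comm]; exact Submodule.smul_mem _ _ hy
  | zero => simpa using (spanW K n).zero_mem
  | add x y _ _ hx hy => rw [add_mul]; exact add_mem hx hy
  | smul c x _ hx => rw [smul_mul_assoc]; exact Submodule.smul_mem _ _ hx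

lemma mem_spanW (a : LRose K n) : a ∈ spanW K n := by
  obtain ⟨x, rfl⟩ := RingQuot.mkAlgHom_surjective K (RoseRel K n) a
  refine FreeAlgebra.induction K (RGen n) ?_ ?_ ?_ ?_ x
  · intro r
    rw [AlgHom.commutes]
    have h1 : (algebraMap K (LRose K n)) r = r • 1 := Algebra.algebraMap_eq_smul_one r
    rw [h1]
    exact Submodule.smul_mem _ _ (wv_mem_spanW K n [])
  · intro x
    cases x with
    | e i =>
      have : (RingQuot.mkAlgHom K (RoseRel K n)) (FreeAlgebra.ι K (RGen.e i))
          = wv K n [RGen.e i] := by simp [wv, lv, ee]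
      rw [this]; exact wv_mem_spanW K n _
    | g j =>
      have : (RingQuot.mkAlgHom K (RoseRel K n)) (FreeAlgebra.ι K (RGen.g j))
          = wv K n [RGen.g j] := by simp [wv, lv, gg]
      rw [this]; exact wv_mem_spanW K n _
  · intro a b ha hb
    rw [map_mul]; exact spanW_mul K n ha hb
  · intro a b ha hb
    rw [map_add]; exact add_mem ha hb


lemma ee_mem (i : Fin n) : ee K n i ∈ rComponent K n 1 := by
  apply Submodule.subset_span
  exact ⟨[i], [], by simp, by simp⟩

lemma gg_mem (j : Fin n) : gg K n j ∈ rComponent K n (-1) := by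
  apply Submodule.subset_span
  exact ⟨[], [j], by simp, by simp⟩

/-- good (roseA-generator) letters -/
def okL : RGen n → Prop
  | .e i => (i : ℕ) ≠ 1
  | .g j => (j : ℕ) ≠ 0

/-- span of roseA-words -/
noncomputable def spanA : Submodule K (LRose K n) :=
  Submodule.span K {x | ∃ l : List (RGen n), (∀ c ∈ l, okL n c) ∧ x = wv K n l}

/-- span of degree-0 roseA-words -/
noncomputable def spanA0 : Submodule K (LRose K n) :=
  Submodule.span K {x | ∃ l : List (RGen n), (∀ c ∈ l, okL n c) ∧ wd n l = 0 ∧ x = wv K n l}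

lemma spanA_mul {a b : LRose K n} (ha : a ∈ spanA K n) (hb : b ∈ spanA K n) :
    a * b ∈ spanA K n := by
  induction ha using Submodule.span_induction with
  | mem x hx =>
    obtain ⟨l, hl, rfl⟩ := hx
    induction hb using Submodule.span_induction with
    | mem y hy =>
      obtain ⟨l', hl', rfl⟩ := hy
      rw [← wv_append]
      exact Submodule.subset_span ⟨l ++ l', by
        intro c hc; rcases List.mem_append.mp hc with h | h
        exacts [hl c h, hl' c h], rfl⟩
    | zero => simpa using (spanA K n).zero_mem
    | add y z _ _ hy hz => rw [mul_add]; exact add_mem hy hz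
    | smul c y _ hy => rw [mul_smul_comm]; exact Submodule.smul_mem _ _ hy
  | zero => simpa using (spanA K n).zero_mem
  | add x y _ _ hx hy => rw [add_mul]; exact add_mem hx hy
  | smul c x _ hx => rw [smul_mul_assoc]; exact Submodule.smul_mem _ _ hx

lemma roseA_le_spanA : (roseA K n : Set (LRose K n)) ⊆ spanA K n := by
  intro a ha
  have hone : (1 : LRose K n) ∈ spanA K n :=
    Submodule.subset_span ⟨[], by simp, rfl⟩
  refine Algebra.adjoin_le (S := (spanA K n).toSubalgebra hone
    (fun x y hx hy => spanA_mul K n hx hy)) ?_ ha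
  rintro x (⟨i, hi, rfl⟩ | ⟨j, hj, rfl⟩)
  · exact Submodule.subset_span ⟨[RGen.e i], by simpa [okL], by simp [wv, lv]⟩
  · exact Submodule.subset_span ⟨[RGen.g j], by simpa [okL], by simp [wv, lv]⟩

/-- the grading hom into Laurent polynomials over LRose -/
noncomputable def beta : LRose K n →ₐ[K] AddMonoidAlgebra (LRose K n) ℤ :=
  RingQuot.liftAlgHom K ⟨FreeAlgebra.lift K (fun x => match x with
    | .e i => AddMonoidAlgebra.single 1 (ee K n i)
    | .g j => AddMonoidAlgebra.single (-1) (gg K n j)), by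
      intro x y h
      induction h with
      | ghostEdgeSame i =>
        rw [map_mul, FreeAlgebra.lift_ι_apply, FreeAlgebra.lift_ι_apply, map_one]
        show AddMonoidAlgebra.single (-1 : ℤ) (gg K n i)
            * AddMonoidAlgebra.single (1 : ℤ) (ee K n i) = 1
        rw [AddMonoidAlgebra.single_mul_single, rel1 K n i, AddMonoidAlgebra.one_def]
        norm_num
      | ghostEdgeNe i j h =>
        rw [map_mul, FreeAlgebra.lift_ι_apply, FreeAlgebra.lift_ι_apply, map_zero]
        show AddMonoidAlgebra.single (-1 : ℤ) (gg K n i)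
            * AddMonoidAlgebra.single (1 : ℤ) (ee K n j) = 0
        rw [AddMonoidAlgebra.single_mul_single, rel2 K n h]
        exact AddMonoidAlgebra.single_zero _
      | ck2 =>
        rw [map_sum, map_one]
        have h1 : ∀ i : Fin n, ((FreeAlgebra.lift K) (fun x => match x with
            | RGen.e i => AddMonoidAlgebra.single (1 : ℤ) (ee K n i)
            | RGen.g j => AddMonoidAlgebra.single (-1 : ℤ) (gg K n j)))
            (FreeAlgebra.ι K (RGen.e i) * FreeAlgebra.ι K (RGen.g i))
            = AddMonoidAlgebra.single 0 (ee K n i * gg K n i) := by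
          intro i
          rw [map_mul, FreeAlgebra.lift_ι_apply, FreeAlgebra.lift_ι_apply]
          show AddMonoidAlgebra.single (1 : ℤ) (ee K n i)
              * AddMonoidAlgebra.single (-1 : ℤ) (gg K n i)
              = AddMonoidAlgebra.single 0 (ee K n i * gg K n i)
          rw [AddMonoidAlgebra.single_mul_single]
          norm_num
        rw [Finset.sum_congr rfl (fun i _ => h1 i), (show (∑ i : Fin n, AddMonoidAlgebra.single (0:ℤ) (ee K n i * gg K n i)) = AddMonoidAlgebra.single 0 (∑ i : Fin n, ee K n i * gg K n i) from (map_sum (AddMonoidAlgebra.singleAddHom (0:ℤ)) _ _).symm),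
          rel3 K n, AddMonoidAlgebra.one_def]⟩

lemma beta_lv (x : RGen n) :
    beta K n (lv K n x) = AddMonoidAlgebra.single (ld n x) (lv K n x) := by
  cases x with
  | e i =>
    show beta K n (ee K n i) = _
    rw [ee, beta, RingQuot.liftAlgHom_mkAlgHom_apply, FreeAlgebra.lift_ι_apply]
    rfl
  | g j =>
    show beta K n (gg K n j) = _
    rw [gg, beta, RingQuot.liftAlgHom_mkAlgHom_apply, FreeAlgebra.lift_ι_apply]
    rfl

lemma beta_wv (l : List (RGen n)) :
    beta K n (wv K n l) = AddMonoidAlgebra.single (wd n l) (wv K n l) := by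
  induction l with
  | nil =>
    rw [wv_nil, map_one, wd_nil, AddMonoidAlgebra.one_def]
  | cons x l ih =>
    rw [wv_cons, map_mul, beta_lv, ih, AddMonoidAlgebra.single_mul_single, wd_cons]

/-- projection on degree 0 -/
noncomputable def pi0 (a : LRose K n) : LRose K n := (beta K n a).coeff 0

lemma pi0_add (a b : LRose K n) : pi0 K n (a + b) = pi0 K n a + pi0 K n b := by
  show (beta K n (a+b)).coeff 0 = _
  rw [map_add]
  exact Finsupp.add_apply _ _ _

lemma pi0_smul (c : K) (a : LRose K n) : pi0 K n (c • a) = c • pi0 K n a := by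
  show (beta K n (c • a)).coeff 0 = _
  rw [map_smul]
  exact Finsupp.smul_apply _ _ _

lemma pi0_wv (l : List (RGen n)) :
    pi0 K n (wv K n l) = if wd n l = 0 then wv K n l else 0 := by
  rw [pi0, beta_wv, AddMonoidAlgebra.coeff_single]
  by_cases h : wd n l = 0
  · rw [if_pos h, h]; exact Finsupp.single_eq_same
  · rw [if_neg h]; exact Finsupp.single_eq_of_ne (Ne.symm h)

lemma pi0_comp0 {a : LRose K n} (ha : a ∈ rComponent K n 0) : pi0 K n a = a := by
  induction ha using Submodule.span_induction with
  | mem x hx =>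
    obtain ⟨pl, ql, hlen, rfl⟩ := hx
    have h1 : (pl.map (ee K n)).prod * (ql.reverse.map (gg K n)).prod
        = wv K n (pl.map RGen.e ++ ql.reverse.map RGen.g) := by
      rw [wv_append]
      congr 1
      · simp only [wv, List.map_map]; rfl
      · simp only [wv, List.map_map]; rfl
    have h2 : wd n (pl.map RGen.e ++ ql.reverse.map RGen.g) = 0 := by
      simp only [wd, List.map_append, List.sum_append, List.map_map]
      have he : ∀ i : Fin n, (ld n ∘ RGen.e) i = 1 := fun _ => rfl
      have hg : ∀ i : Fin n, (ld n ∘ RGen.g) i = -1 := fun _ => rfl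
      rw [List.map_congr_left (fun c _ => he c), List.map_congr_left (fun c _ => hg c)]
      simp
      omega
    rw [h1, pi0_wv, if_pos h2]
  | zero => simp [pi0, map_zero]
  | add x y _ _ hx hy => rw [pi0_add, hx, hy]
  | smul c x _ hx => rw [pi0_smul, hx]

lemma pi0_spanA {a : LRose K n} (ha : a ∈ spanA K n) : pi0 K n a ∈ spanA0 K n := by
  induction ha using Submodule.span_induction with
  | mem x hx =>
    obtain ⟨l, hl, rfl⟩ := hx
    rw [pi0_wv]
    by_cases h : wd n l = 0
    · rw [if_pos h]; exact Submodule.subset_span ⟨l, hl, h, rfl⟩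
    · rw [if_neg h]; exact zero_mem _
  | zero => simp [pi0, map_zero]
  | add x y _ _ hx hy => rw [pi0_add]; exact add_mem hx hy
  | smul c x _ hx => rw [pi0_smul]; exact Submodule.smul_mem _ _ hx

lemma p_mem_spanA0 {a : LRose K n} (hA : a ∈ roseA K n) (h0 : a ∈ rComponent K n 0) :
    a ∈ spanA0 K n := by
  have := pi0_spanA K n (roseA_le_spanA K n hA)
  rwa [pi0_comp0 K n h0] at this

/-- bundle of all hypotheses of stmt16 -/
structure Setup (K : Type) [Field K] (n : ℕ) where
  hn : 2 ≤ n
  p : LRose K n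
  hpA : p ∈ roseA K n
  hp0 : p ∈ rComponent K n 0
  φ : LRose K n →ₐ[K] LRose K n
  φ' : LRose K n →ₐ[K] LRose K n
  hφe : ∀ i : Fin n, (i : ℕ) ≠ 1 → φ (ee K n i) = ee K n i
  hφg : ∀ j : Fin n, (j : ℕ) ≠ 0 → φ (gg K n j) = gg K n j
  hφe2 : φ (ee K n ⟨1, Nat.lt_of_lt_of_le (by decide) hn⟩) = ee K n ⟨1, Nat.lt_of_lt_of_le (by decide) hn⟩ + ee K n ⟨0, Nat.lt_of_lt_of_le (by decide) hn⟩ * p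
  hφg1 : φ (gg K n ⟨0, Nat.lt_of_lt_of_le (by decide) hn⟩) = gg K n ⟨0, Nat.lt_of_lt_of_le (by decide) hn⟩ - p * gg K n ⟨1, Nat.lt_of_lt_of_le (by decide) hn⟩
  hφ'e : ∀ i : Fin n, (i : ℕ) ≠ 1 → φ' (ee K n i) = ee K n i
  hφ'g : ∀ j : Fin n, (j : ℕ) ≠ 0 → φ' (gg K n j) = gg K n j
  hφ'e2 : φ' (ee K n ⟨1, Nat.lt_of_lt_of_le (by decide) hn⟩) = ee K n ⟨1, Nat.lt_of_lt_of_le (by decide) hn⟩ - ee K n ⟨0, Nat.lt_of_lt_of_le (by decide) hn⟩ * p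
  hφ'g1 : φ' (gg K n ⟨0, Nat.lt_of_lt_of_le (by decide) hn⟩) = gg K n ⟨0, Nat.lt_of_lt_of_le (by decide) hn⟩ + p * gg K n ⟨1, Nat.lt_of_lt_of_le (by decide) hn⟩
  hinv : ∀ x, φ (φ' x) = x ∧ φ' (φ x) = x
  θ : LRose K n →ₗ[K] LRose K n
  hone : θ 1 = 1
  hmulPos : ∀ m : ℕ, ∀ a ∈ rComponent K n (m : ℤ), ∀ b,
    θ (a * b) = θ a * (⇑φ)^[m] (θ b)
  hmulNeg : ∀ m : ℕ, ∀ a ∈ rComponent K n (-(m : ℤ)), ∀ b,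
    θ (a * b) = θ a * (⇑φ')^[m] (θ b)
  hθe : ∀ i, θ (ee K n i) = ee K n i
  hθg : ∀ j : Fin n, (j : ℕ) ≠ 0 → θ (gg K n j) = gg K n j
  hθg1 : θ (gg K n ⟨0, Nat.lt_of_lt_of_le (by decide) hn⟩) =
    gg K n ⟨0, Nat.lt_of_lt_of_le (by decide) hn⟩ + p * gg K n ⟨1, Nat.lt_of_lt_of_le (by decide) hn⟩

namespace Setup

variable {K : Type} [Field K] {n : ℕ} (S : Setup K n)

def i0 : Fin n := ⟨0, by have := S.hn; omega⟩
def i1 : Fin n := ⟨1, by have := S.hn; omega⟩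

lemma i0_ne_i1 : S.i0 ≠ S.i1 := by
  intro h
  have := congrArg Fin.val h
  simp [i0, i1] at this

lemma hφe2' : S.φ (ee K n S.i1) = ee K n S.i1 + ee K n S.i0 * S.p := S.hφe2
lemma hφg1' : S.φ (gg K n S.i0) = gg K n S.i0 - S.p * gg K n S.i1 := S.hφg1
lemma hφ'e2' : S.φ' (ee K n S.i1) = ee K n S.i1 - ee K n S.i0 * S.p := S.hφ'e2
lemma hφ'g1' : S.φ' (gg K n S.i0) = gg K n S.i0 + S.p * gg K n S.i1 := S.hφ'g1
lemma hθg1' : S.θ (gg K n S.i0) = gg K n S.i0 + S.p * gg K n S.i1 := S.hθg1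

/-- closed form for θ on ghost generators -/
noncomputable def tg (j : Fin n) : LRose K n :=
  if (j : ℕ) = 0 then gg K n S.i0 + S.p * gg K n S.i1 else gg K n j

/-- the images of ghost generators under the inverse twisted morphism -/
noncomputable def tg' (j : Fin n) : LRose K n :=
  if (j : ℕ) = 0 then gg K n S.i0 - S.p * gg K n S.i1 else gg K n j

lemma theta_gg (j : Fin n) : S.θ (gg K n j) = S.tg j := by
  by_cases h : (j : ℕ) = 0
  · have hj : j = S.i0 := Fin.ext h
    rw [hj, tg, if_pos (show (S.i0 : ℕ) = 0 from rfl)]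
    exact S.hθg1'
  · rw [tg, if_neg h]; exact S.hθg j h

lemma phi_fix_ok {x : RGen n} (hx : okL n x) : S.φ (lv K n x) = lv K n x := by
  cases x with
  | e i => exact S.hφe i hx
  | g j => exact S.hφg j hx

lemma phi'_fix_ok {x : RGen n} (hx : okL n x) : S.φ' (lv K n x) = lv K n x := by
  cases x with
  | e i => exact S.hφ'e i hx
  | g j => exact S.hφ'g j hx

lemma phi_fix_word {l : List (RGen n)} (hl : ∀ c ∈ l, okL n c) :
    S.φ (wv K n l) = wv K n l := by
  induction l with
  | nil => simp
  | cons x l ih =>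
    rw [wv_cons, map_mul, S.phi_fix_ok (hl x (by simp)), ih (fun c hc => hl c (by simp [hc]))]

lemma phi'_fix_word {l : List (RGen n)} (hl : ∀ c ∈ l, okL n c) :
    S.φ' (wv K n l) = wv K n l := by
  induction l with
  | nil => simp
  | cons x l ih =>
    rw [wv_cons, map_mul, S.phi'_fix_ok (hl x (by simp)), ih (fun c hc => hl c (by simp [hc]))]

lemma phi_fix_spanA {a : LRose K n} (ha : a ∈ spanA K n) : S.φ a = a := by
  induction ha using Submodule.span_induction with
  | mem x hx => obtain ⟨l, hl, rfl⟩ := hx; exact S.phi_fix_word hl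
  | zero => simp
  | add x y _ _ hx hy => rw [map_add, hx, hy]
  | smul c x _ hx => rw [map_smul, hx]

lemma phi'_fix_spanA {a : LRose K n} (ha : a ∈ spanA K n) : S.φ' a = a := by
  induction ha using Submodule.span_induction with
  | mem x hx => obtain ⟨l, hl, rfl⟩ := hx; exact S.phi'_fix_word hl
  | zero => simp
  | add x y _ _ hx hy => rw [map_add, hx, hy]
  | smul c x _ hx => rw [map_smul, hx]

lemma phi_p : S.φ S.p = S.p := S.phi_fix_spanA (roseA_le_spanA K n S.hpA)

lemma phi'_p : S.φ' S.p = S.p := S.phi'_fix_spanA (roseA_le_spanA K n S.hpA)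

/-- φ as a permutation -/
noncomputable def pE : Equiv.Perm (LRose K n) :=
  ⟨S.φ, S.φ', fun x => (S.hinv x).2, fun x => (S.hinv x).1⟩

/-- integer iterates of φ -/
noncomputable def Φ (m : ℤ) : LRose K n → LRose K n := ⇑(S.pE ^ m)

lemma Φ_zero (y : LRose K n) : S.Φ 0 y = y := by simp [Φ]

lemma Φ_succ (m : ℤ) (y : LRose K n) : S.φ (S.Φ m y) = S.Φ (m + 1) y := by
  have : S.pE ^ (m + 1) = S.pE * S.pE ^ m := by
    rw [add_comm, zpow_add, zpow_one]
  rw [Φ, Φ, this, Equiv.Perm.mul_apply]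
  rfl

lemma Φ_pred (m : ℤ) (y : LRose K n) : S.φ' (S.Φ m y) = S.Φ (m - 1) y := by
  have : S.pE ^ (m - 1) = S.pE⁻¹ * S.pE ^ m := by
    rw [sub_eq_add_neg, add_comm, zpow_add, zpow_neg, zpow_one]
  rw [Φ, Φ, this, Equiv.Perm.mul_apply]
  rfl

lemma Φ_comp_phi (m : ℤ) (y : LRose K n) : S.Φ m (S.φ y) = S.Φ (m + 1) y := by
  have : S.pE ^ (m + 1) = S.pE ^ m * S.pE := by rw [zpow_add, zpow_one]
  rw [Φ, Φ, this, Equiv.Perm.mul_apply]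
  rfl

lemma Φ_comp_phi' (m : ℤ) (y : LRose K n) : S.Φ m (S.φ' y) = S.Φ (m - 1) y := by
  have : S.pE ^ (m - 1) = S.pE ^ m * S.pE⁻¹ := by
    rw [sub_eq_add_neg, zpow_add, zpow_neg, zpow_one]
  rw [Φ, Φ, this, Equiv.Perm.mul_apply]
  rfl

lemma Φ_one (m : ℤ) : S.Φ m 1 = 1 := by
  induction m using Int.induction_on with
  | zero => exact S.Φ_zero 1
  | succ k ih =>
    have := S.Φ_succ k 1
    rw [ih] at this
    rw [← this, map_one]
  | pred k ih =>
    have := S.Φ_pred (-k) 1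
    rw [ih] at this
    rw [← this, map_one]

end Setup

namespace Setup

variable {K : Type} [Field K] {n : ℕ} (S : Setup K n)

lemma tg_phi'_ee (i j : Fin n) :
    S.tg i * S.φ' (ee K n j) = if i = j then 1 else 0 := by
  by_cases hi : (i : ℕ) = 0
  · have hi' : i = S.i0 := Fin.ext hi
    subst hi'
    rw [tg, if_pos (show (S.i0 : ℕ) = 0 from rfl)]
    by_cases hj : (j : ℕ) = 1
    · have hj' : j = S.i1 := Fin.ext hj
      subst hj'
      rw [S.hφ'e2', if_neg S.i0_ne_i1]
      have h01 : S.i0 ≠ S.i1 := S.i0_ne_i1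
      have h10 : S.i1 ≠ S.i0 := S.i0_ne_i1.symm
      simp [mul_sub, sub_mul, add_mul, mul_add, mul_assoc, rel1, rel2 K n h01,
        rel2 K n h10, geh, gehne K n h01, gehne K n h10]
    · rw [S.hφ'e j hj, add_mul]
      by_cases hij : S.i0 = j
      · subst hij
        have h1j : S.i1 ≠ S.i0 := S.i0_ne_i1.symm
        simp [mul_assoc, rel1, gehne K n h1j, rel2 K n h1j]
      · rw [if_neg hij]
        have h1j : S.i1 ≠ j := by
          intro h; apply hj; rw [← h]; rfl
        simp [mul_assoc, rel2 K n hij, gehne K n h1j, rel2 K n h1j]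
  · have hi0 : i ≠ S.i0 := by intro h; apply hi; rw [h]; rfl
    rw [tg, if_neg hi]
    by_cases hj : (j : ℕ) = 1
    · have hj' : j = S.i1 := Fin.ext hj
      subst hj'
      rw [S.hφ'e2', mul_sub]
      by_cases hij : i = S.i1
      · subst hij
        simp [mul_assoc, rel1, gehne K n hi0]
      · simp [mul_assoc, rel2 K n hij, gehne K n hi0, if_neg hij]
    · rw [S.hφ'e j hj]
      by_cases hij : i = j
      · subst hij; rw [if_pos rfl, rel1]
      · rw [if_neg hij, rel2 K n hij]

lemma tg'_phi_ee (i j : Fin n) :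
    S.tg' i * S.φ (ee K n j) = if i = j then 1 else 0 := by
  by_cases hi : (i : ℕ) = 0
  · have hi' : i = S.i0 := Fin.ext hi
    subst hi'
    rw [tg', if_pos (show (S.i0 : ℕ) = 0 from rfl)]
    by_cases hj : (j : ℕ) = 1
    · have hj' : j = S.i1 := Fin.ext hj
      subst hj'
      rw [S.hφe2', if_neg S.i0_ne_i1]
      have h01 : S.i0 ≠ S.i1 := S.i0_ne_i1
      have h10 : S.i1 ≠ S.i0 := S.i0_ne_i1.symm
      simp [mul_sub, sub_mul, add_mul, mul_add, mul_assoc, rel1, rel2 K n h01,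
        rel2 K n h10, geh, gehne K n h01, gehne K n h10]
    · rw [S.hφe j hj, sub_mul]
      by_cases hij : S.i0 = j
      · subst hij
        have h1j : S.i1 ≠ S.i0 := S.i0_ne_i1.symm
        simp [mul_assoc, rel1, gehne K n h1j, rel2 K n h1j]
      · rw [if_neg hij]
        have h1j : S.i1 ≠ j := by
          intro h; apply hj; rw [← h]; rfl
        simp [mul_assoc, rel2 K n hij, gehne K n h1j, rel2 K n h1j]
  · have hi0 : i ≠ S.i0 := by intro h; apply hi; rw [h]; rfl
    rw [tg', if_neg hi]
    by_cases hj : (j : ℕ) = 1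
    · have hj' : j = S.i1 := Fin.ext hj
      subst hj'
      rw [S.hφe2', mul_add]
      by_cases hij : i = S.i1
      · subst hij
        simp [mul_assoc, rel1, gehne K n hi0]
      · simp [mul_assoc, rel2 K n hij, gehne K n hi0, if_neg hij]
    · rw [S.hφe j hj]
      by_cases hij : i = j
      · subst hij; rw [if_pos rfl, rel1]
      · rw [if_neg hij, rel2 K n hij]

lemma phi_tg (j : Fin n) : S.φ (S.tg j) = gg K n j := by
  by_cases h : (j : ℕ) = 0
  · have hj : j = S.i0 := Fin.ext h
    subst hj
    rw [tg, if_pos (show (S.i0 : ℕ) = 0 from rfl), map_add, map_mul, S.phi_p, S.hφg1',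
      S.hφg S.i1 (by simp [Setup.i1])]
    abel
  · rw [tg, if_neg h, S.hφg j h]

lemma phi'_tg' (j : Fin n) : S.φ' (S.tg' j) = gg K n j := by
  by_cases h : (j : ℕ) = 0
  · have hj : j = S.i0 := Fin.ext h
    subst hj
    rw [tg', if_pos (show (S.i0 : ℕ) = 0 from rfl), map_sub, map_mul, S.phi'_p, S.hφ'g1',
      S.hφ'g S.i1 (by simp [Setup.i1])]
    abel
  · rw [tg', if_neg h, S.hφ'g j h]

/-- the representation attached to θ -/
noncomputable def rho : LRose K n →ₐ[K] Module.End K (LRose K n) :=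
  RingQuot.liftAlgHom K ⟨FreeAlgebra.lift K (fun x => match x with
    | .e i => (LinearMap.mulLeft K (ee K n i)).comp S.φ.toLinearMap
    | .g j => (LinearMap.mulLeft K (S.tg j)).comp S.φ'.toLinearMap), by
      intro x y h
      induction h with
      | ghostEdgeSame i =>
        rw [map_mul, map_one, FreeAlgebra.lift_ι_apply, FreeAlgebra.lift_ι_apply]
        apply LinearMap.ext
        intro y
        show S.tg i * S.φ' (ee K n i * S.φ y) = y
        rw [map_mul, (S.hinv y).2, ← mul_assoc, tg_phi'_ee, if_pos rfl, one_mul]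
      | ghostEdgeNe i j h =>
        rw [map_mul, map_zero, FreeAlgebra.lift_ι_apply, FreeAlgebra.lift_ι_apply]
        apply LinearMap.ext
        intro y
        show S.tg i * S.φ' (ee K n j * S.φ y) = 0
        rw [map_mul, (S.hinv y).2, ← mul_assoc, tg_phi'_ee, if_neg h, zero_mul]
      | ck2 =>
        rw [map_sum, map_one]
        apply LinearMap.ext
        intro y
        rw [LinearMap.sum_apply]
        trans (∑ d : Fin n, ee K n d * gg K n d * y)
        · refine Finset.sum_congr rfl (fun i _ => ?_)
          rw [map_mul, Module.End.mul_apply, FreeAlgebra.lift_ι_apply,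
            FreeAlgebra.lift_ι_apply]
          show ee K n i * S.φ (S.tg i * S.φ' y) = _
          rw [map_mul, (S.hinv y).1, phi_tg, mul_assoc]
        · rw [← Finset.sum_mul, rel3, one_mul]
          rfl⟩

/-- the representation attached to the inverse of θ -/
noncomputable def sigma : LRose K n →ₐ[K] Module.End K (LRose K n) :=
  RingQuot.liftAlgHom K ⟨FreeAlgebra.lift K (fun x => match x with
    | .e i => (LinearMap.mulLeft K (ee K n i)).comp S.φ'.toLinearMap
    | .g j => (LinearMap.mulLeft K (S.tg' j)).comp S.φ.toLinearMap), by
      intro x y h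
      induction h with
      | ghostEdgeSame i =>
        rw [map_mul, map_one, FreeAlgebra.lift_ι_apply, FreeAlgebra.lift_ι_apply]
        apply LinearMap.ext
        intro y
        show S.tg' i * S.φ (ee K n i * S.φ' y) = y
        rw [map_mul, (S.hinv y).1, ← mul_assoc, tg'_phi_ee, if_pos rfl, one_mul]
      | ghostEdgeNe i j h =>
        rw [map_mul, map_zero, FreeAlgebra.lift_ι_apply, FreeAlgebra.lift_ι_apply]
        apply LinearMap.ext
        intro y
        show S.tg' i * S.φ (ee K n j * S.φ' y) = 0
        rw [map_mul, (S.hinv y).1, ← mul_assoc, tg'_phi_ee, if_neg h, zero_mul]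
      | ck2 =>
        rw [map_sum, map_one]
        apply LinearMap.ext
        intro y
        rw [LinearMap.sum_apply]
        trans (∑ d : Fin n, ee K n d * gg K n d * y)
        · refine Finset.sum_congr rfl (fun i _ => ?_)
          rw [map_mul, Module.End.mul_apply, FreeAlgebra.lift_ι_apply,
            FreeAlgebra.lift_ι_apply]
          show ee K n i * S.φ' (S.tg' i * S.φ y) = _
          rw [map_mul, (S.hinv y).2, phi'_tg', mul_assoc]
        · rw [← Finset.sum_mul, rel3, one_mul]
          rfl⟩

lemma rho_e (i : Fin n) (y : LRose K n) :
    rho S (ee K n i) y = ee K n i * S.φ y := by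
  rw [ee, rho, RingQuot.liftAlgHom_mkAlgHom_apply, FreeAlgebra.lift_ι_apply]
  rfl

lemma rho_g (j : Fin n) (y : LRose K n) :
    rho S (gg K n j) y = S.tg j * S.φ' y := by
  rw [gg, rho, RingQuot.liftAlgHom_mkAlgHom_apply, FreeAlgebra.lift_ι_apply]
  rfl

lemma sigma_e (i : Fin n) (y : LRose K n) :
    sigma S (ee K n i) y = ee K n i * S.φ' y := by
  rw [ee, sigma, RingQuot.liftAlgHom_mkAlgHom_apply, FreeAlgebra.lift_ι_apply]
  rfl

lemma sigma_g (j : Fin n) (y : LRose K n) :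
    sigma S (gg K n j) y = S.tg' j * S.φ y := by
  rw [gg, sigma, RingQuot.liftAlgHom_mkAlgHom_apply, FreeAlgebra.lift_ι_apply]
  rfl

end Setup

namespace Setup

variable {K : Type} [Field K] {n : ℕ} (S : Setup K n)

lemma theta_e_mul (i : Fin n) (b : LRose K n) :
    S.θ (ee K n i * b) = ee K n i * S.φ (S.θ b) := by
  have h := S.hmulPos 1 (ee K n i) (by rw [Nat.cast_one]; exact ee_mem K n i) b
  rw [Function.iterate_one, S.hθe] at h
  exact h

lemma theta_g_mul (j : Fin n) (b : LRose K n) :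
    S.θ (gg K n j * b) = S.tg j * S.φ' (S.θ b) := by
  have h := S.hmulNeg 1 (gg K n j) (by rw [Nat.cast_one]; exact gg_mem K n j) b
  rw [Function.iterate_one, S.theta_gg] at h
  exact h

lemma rho_one_word (l : List (RGen n)) : rho S (wv K n l) 1 = S.θ (wv K n l) := by
  induction l with
  | nil =>
    rw [wv_nil, map_one (rho S)]
    exact S.hone.symm
  | cons x l ih =>
    rw [wv_cons, map_mul, Module.End.mul_apply, ih]
    cases x with
    | e i => rw [lv_e, rho_e, ← theta_e_mul]
    | g j => rw [lv_g, rho_g, ← theta_g_mul]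

lemma rho_one (a : LRose K n) : rho S a 1 = S.θ a := by
  have h := mem_spanW K n a
  induction h using Submodule.span_induction with
  | mem x hx => obtain ⟨l, rfl⟩ := hx; exact S.rho_one_word l
  | zero => rw [map_zero, map_zero]; rfl
  | add x y _ _ hx hy =>
    rw [map_add, map_add, LinearMap.add_apply, hx, hy]
  | smul c x _ hx =>
    rw [map_smul, map_smul, LinearMap.smul_apply, hx]

lemma sigma_okword {l : List (RGen n)} (hl : ∀ c ∈ l, okL n c) (y : LRose K n) :
    sigma S (wv K n l) y = wv K n l * S.Φ (-(wd n l)) y := by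
  induction l with
  | nil =>
    rw [wv_nil, map_one, Module.End.one_apply, wd_nil, neg_zero, S.Φ_zero, one_mul]
  | cons x l ih =>
    have hl' : ∀ c ∈ l, okL n c := fun c hc => hl c (by simp [hc])
    have hd : -(wd n (x :: l)) = -(wd n l) + -(ld n x) := by rw [wd_cons]; ring
    rw [wv_cons, map_mul, Module.End.mul_apply, ih hl']
    cases x with
    | e i =>
      rw [lv_e, sigma_e, map_mul, S.phi'_fix_word hl', S.Φ_pred, hd]
      show _ = ee K n i * wv K n l * S.Φ (-wd n l + -1) y
      rw [mul_assoc, sub_eq_add_neg]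
    | g j =>
      have hj : (j : ℕ) ≠ 0 := hl (RGen.g j) (by simp)
      rw [lv_g, sigma_g, tg', if_neg hj, map_mul, S.phi_fix_word hl', S.Φ_succ, hd]
      show _ = gg K n j * wv K n l * S.Φ (-wd n l + -(-1)) y
      rw [mul_assoc, neg_neg]

lemma rho_okword {l : List (RGen n)} (hl : ∀ c ∈ l, okL n c) (y : LRose K n) :
    rho S (wv K n l) y = wv K n l * S.Φ (wd n l) y := by
  induction l with
  | nil => rw [wv_nil, map_one, Module.End.one_apply, wd_nil, S.Φ_zero, one_mul]
  | cons x l ih =>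
    have hl' : ∀ c ∈ l, okL n c := fun c hc => hl c (by simp [hc])
    rw [wv_cons, map_mul, Module.End.mul_apply, ih hl']
    cases x with
    | e i =>
      rw [lv_e, rho_e, map_mul, S.phi_fix_word hl', S.Φ_succ, wd_cons]
      show _ = ee K n i * wv K n l * S.Φ (1 + wd n l) y
      rw [mul_assoc, add_comm]
    | g j =>
      have hj : (j : ℕ) ≠ 0 := hl (RGen.g j) (by simp)
      rw [lv_g, rho_g, tg, if_neg hj, map_mul, S.phi'_fix_word hl', S.Φ_pred, wd_cons]
      show _ = gg K n j * wv K n l * S.Φ (-1 + wd n l) y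
      rw [mul_assoc, add_comm, sub_eq_add_neg]

lemma sigma_p (y : LRose K n) : sigma S S.p y = S.p * y := by
  have hp := p_mem_spanA0 K n S.hpA S.hp0
  have : ∀ q ∈ spanA0 K n, ∀ y : LRose K n, sigma S q y = q * y := by
    intro q hq
    induction hq using Submodule.span_induction with
    | mem x hx =>
      obtain ⟨l, hl, h0, rfl⟩ := hx
      intro y
      rw [S.sigma_okword hl, h0, neg_zero, S.Φ_zero]
    | zero => intro y; rw [map_zero, zero_mul]; rfl
    | add x y' _ _ hx hy =>
      intro y
      rw [map_add, LinearMap.add_apply, hx y, hy y, add_mul]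
    | smul c x _ hx =>
      intro y
      rw [map_smul, LinearMap.smul_apply, hx y, smul_mul_assoc]
  exact this S.p hp y

lemma rho_p (y : LRose K n) : rho S S.p y = S.p * y := by
  have hp := p_mem_spanA0 K n S.hpA S.hp0
  have : ∀ q ∈ spanA0 K n, ∀ y : LRose K n, rho S q y = q * y := by
    intro q hq
    induction hq using Submodule.span_induction with
    | mem x hx =>
      obtain ⟨l, hl, h0, rfl⟩ := hx
      intro y
      rw [S.rho_okword hl, h0, S.Φ_zero]
    | zero => intro y; rw [map_zero, zero_mul]; rfl
    | add x y' _ _ hx hy =>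
      intro y
      rw [map_add, LinearMap.add_apply, hx y, hy y, add_mul]
    | smul c x _ hx =>
      intro y
      rw [map_smul, LinearMap.smul_apply, hx y, smul_mul_assoc]
  exact this S.p hp y

end Setup

namespace Setup

variable {K : Type} [Field K] {n : ℕ} (S : Setup K n)

lemma i1_ne : (S.i1 : ℕ) ≠ 0 := by simp [i1]
lemma i0_ne : (S.i0 : ℕ) ≠ 1 := by simp [i0]

lemma tg_i0 : S.tg S.i0 = gg K n S.i0 + S.p * gg K n S.i1 := by
  rw [tg, if_pos (show (S.i0 : ℕ) = 0 from rfl)]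
lemma tg_ne {j : Fin n} (hj : (j : ℕ) ≠ 0) : S.tg j = gg K n j := by
  rw [tg, if_neg hj]
lemma tg'_i0 : S.tg' S.i0 = gg K n S.i0 - S.p * gg K n S.i1 := by
  rw [tg', if_pos (show (S.i0 : ℕ) = 0 from rfl)]
lemma tg'_ne {j : Fin n} (hj : (j : ℕ) ≠ 0) : S.tg' j = gg K n j := by
  rw [tg', if_neg hj]

lemma hinv1 : ∀ w, S.φ (S.φ' w) = w := fun w => (S.hinv w).1
lemma hinv2 : ∀ w, S.φ' (S.φ w) = w := fun w => (S.hinv w).2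

lemma sigma_phi_letter (x : RGen n) (z : LRose K n) :
    sigma S (S.φ (lv K n x)) (S.φ z) = S.φ (sigma S (lv K n x) z) := by
  cases x with
  | e i =>
    rw [lv_e]
    by_cases hi : (i : ℕ) = 1
    · have hi' : i = S.i1 := Fin.ext hi
      subst hi'
      simp only [map_add, map_sub, map_mul, LinearMap.add_apply, LinearMap.sub_apply, Module.End.mul_apply, sigma_e, sigma_g, rho_e, rho_g, sigma_p, rho_p, S.tg_i0, S.tg'_i0, S.tg_ne S.i1_ne, S.tg'_ne S.i1_ne, S.phi_p, S.phi'_p, S.hinv1, S.hinv2, S.hφe2', S.hφg1', S.hφ'e2', S.hφ'g1', S.hφg S.i1 S.i1_ne, S.hφ'g S.i1 S.i1_ne, S.hφe S.i0 S.i0_ne, S.hφ'e S.i0 S.i0_ne]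
      simp only [sub_mul, add_mul, mul_sub, mul_add, mul_assoc]
      all_goals abel
    · simp only [S.hφe i hi, map_add, map_sub, map_mul, LinearMap.add_apply, LinearMap.sub_apply, Module.End.mul_apply, sigma_e, sigma_g, rho_e, rho_g, sigma_p, rho_p, S.tg_i0, S.tg'_i0, S.tg_ne S.i1_ne, S.tg'_ne S.i1_ne, S.phi_p, S.phi'_p, S.hinv1, S.hinv2, S.hφe2', S.hφg1', S.hφ'e2', S.hφ'g1', S.hφg S.i1 S.i1_ne, S.hφ'g S.i1 S.i1_ne, S.hφe S.i0 S.i0_ne, S.hφ'e S.i0 S.i0_ne]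
  | g j =>
    rw [lv_g]
    by_cases hj : (j : ℕ) = 0
    · have hj' : j = S.i0 := Fin.ext hj
      subst hj'
      simp only [map_add, map_sub, map_mul, LinearMap.add_apply, LinearMap.sub_apply, Module.End.mul_apply, sigma_e, sigma_g, rho_e, rho_g, sigma_p, rho_p, S.tg_i0, S.tg'_i0, S.tg_ne S.i1_ne, S.tg'_ne S.i1_ne, S.phi_p, S.phi'_p, S.hinv1, S.hinv2, S.hφe2', S.hφg1', S.hφ'e2', S.hφ'g1', S.hφg S.i1 S.i1_ne, S.hφ'g S.i1 S.i1_ne, S.hφe S.i0 S.i0_ne, S.hφ'e S.i0 S.i0_ne]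
      simp only [sub_mul, add_mul, mul_sub, mul_add, mul_assoc]
      all_goals abel
    · simp only [S.hφg j hj, S.tg_ne hj, S.tg'_ne hj, map_add, map_sub, map_mul, LinearMap.add_apply, LinearMap.sub_apply, Module.End.mul_apply, sigma_e, sigma_g, rho_e, rho_g, sigma_p, rho_p, S.tg_i0, S.tg'_i0, S.tg_ne S.i1_ne, S.tg'_ne S.i1_ne, S.phi_p, S.phi'_p, S.hinv1, S.hinv2, S.hφe2', S.hφg1', S.hφ'e2', S.hφ'g1', S.hφg S.i1 S.i1_ne, S.hφ'g S.i1 S.i1_ne, S.hφe S.i0 S.i0_ne, S.hφ'e S.i0 S.i0_ne]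

lemma sigma_phi'_letter (x : RGen n) (z : LRose K n) :
    sigma S (S.φ' (lv K n x)) (S.φ' z) = S.φ' (sigma S (lv K n x) z) := by
  cases x with
  | e i =>
    rw [lv_e]
    by_cases hi : (i : ℕ) = 1
    · have hi' : i = S.i1 := Fin.ext hi
      subst hi'
      simp only [map_add, map_sub, map_mul, LinearMap.add_apply, LinearMap.sub_apply, Module.End.mul_apply, sigma_e, sigma_g, rho_e, rho_g, sigma_p, rho_p, S.tg_i0, S.tg'_i0, S.tg_ne S.i1_ne, S.tg'_ne S.i1_ne, S.phi_p, S.phi'_p, S.hinv1, S.hinv2, S.hφe2', S.hφg1', S.hφ'e2', S.hφ'g1', S.hφg S.i1 S.i1_ne, S.hφ'g S.i1 S.i1_ne, S.hφe S.i0 S.i0_ne, S.hφ'e S.i0 S.i0_ne]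
      simp only [sub_mul, add_mul, mul_sub, mul_add, mul_assoc]
      all_goals abel
    · simp only [S.hφ'e i hi, map_add, map_sub, map_mul, LinearMap.add_apply, LinearMap.sub_apply, Module.End.mul_apply, sigma_e, sigma_g, rho_e, rho_g, sigma_p, rho_p, S.tg_i0, S.tg'_i0, S.tg_ne S.i1_ne, S.tg'_ne S.i1_ne, S.phi_p, S.phi'_p, S.hinv1, S.hinv2, S.hφe2', S.hφg1', S.hφ'e2', S.hφ'g1', S.hφg S.i1 S.i1_ne, S.hφ'g S.i1 S.i1_ne, S.hφe S.i0 S.i0_ne, S.hφ'e S.i0 S.i0_ne]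
  | g j =>
    rw [lv_g]
    by_cases hj : (j : ℕ) = 0
    · have hj' : j = S.i0 := Fin.ext hj
      subst hj'
      simp only [map_add, map_sub, map_mul, LinearMap.add_apply, LinearMap.sub_apply, Module.End.mul_apply, sigma_e, sigma_g, rho_e, rho_g, sigma_p, rho_p, S.tg_i0, S.tg'_i0, S.tg_ne S.i1_ne, S.tg'_ne S.i1_ne, S.phi_p, S.phi'_p, S.hinv1, S.hinv2, S.hφe2', S.hφg1', S.hφ'e2', S.hφ'g1', S.hφg S.i1 S.i1_ne, S.hφ'g S.i1 S.i1_ne, S.hφe S.i0 S.i0_ne, S.hφ'e S.i0 S.i0_ne]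
      simp only [sub_mul, add_mul, mul_sub, mul_add, mul_assoc]
      all_goals abel
    · simp only [S.hφ'g j hj, S.tg_ne hj, S.tg'_ne hj, map_add, map_sub, map_mul, LinearMap.add_apply, LinearMap.sub_apply, Module.End.mul_apply, sigma_e, sigma_g, rho_e, rho_g, sigma_p, rho_p, S.tg_i0, S.tg'_i0, S.tg_ne S.i1_ne, S.tg'_ne S.i1_ne, S.phi_p, S.phi'_p, S.hinv1, S.hinv2, S.hφe2', S.hφg1', S.hφ'e2', S.hφ'g1', S.hφg S.i1 S.i1_ne, S.hφ'g S.i1 S.i1_ne, S.hφe S.i0 S.i0_ne, S.hφ'e S.i0 S.i0_ne]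

lemma rho_phi_letter (x : RGen n) (z : LRose K n) :
    rho S (S.φ (lv K n x)) (S.φ z) = S.φ (rho S (lv K n x) z) := by
  cases x with
  | e i =>
    rw [lv_e]
    by_cases hi : (i : ℕ) = 1
    · have hi' : i = S.i1 := Fin.ext hi
      subst hi'
      simp only [map_add, map_sub, map_mul, LinearMap.add_apply, LinearMap.sub_apply, Module.End.mul_apply, sigma_e, sigma_g, rho_e, rho_g, sigma_p, rho_p, S.tg_i0, S.tg'_i0, S.tg_ne S.i1_ne, S.tg'_ne S.i1_ne, S.phi_p, S.phi'_p, S.hinv1, S.hinv2, S.hφe2', S.hφg1', S.hφ'e2', S.hφ'g1', S.hφg S.i1 S.i1_ne, S.hφ'g S.i1 S.i1_ne, S.hφe S.i0 S.i0_ne, S.hφ'e S.i0 S.i0_ne]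
      simp only [sub_mul, add_mul, mul_sub, mul_add, mul_assoc]
      all_goals abel
    · simp only [S.hφe i hi, map_add, map_sub, map_mul, LinearMap.add_apply, LinearMap.sub_apply, Module.End.mul_apply, sigma_e, sigma_g, rho_e, rho_g, sigma_p, rho_p, S.tg_i0, S.tg'_i0, S.tg_ne S.i1_ne, S.tg'_ne S.i1_ne, S.phi_p, S.phi'_p, S.hinv1, S.hinv2, S.hφe2', S.hφg1', S.hφ'e2', S.hφ'g1', S.hφg S.i1 S.i1_ne, S.hφ'g S.i1 S.i1_ne, S.hφe S.i0 S.i0_ne, S.hφ'e S.i0 S.i0_ne]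
  | g j =>
    rw [lv_g]
    by_cases hj : (j : ℕ) = 0
    · have hj' : j = S.i0 := Fin.ext hj
      subst hj'
      simp only [map_add, map_sub, map_mul, LinearMap.add_apply, LinearMap.sub_apply, Module.End.mul_apply, sigma_e, sigma_g, rho_e, rho_g, sigma_p, rho_p, S.tg_i0, S.tg'_i0, S.tg_ne S.i1_ne, S.tg'_ne S.i1_ne, S.phi_p, S.phi'_p, S.hinv1, S.hinv2, S.hφe2', S.hφg1', S.hφ'e2', S.hφ'g1', S.hφg S.i1 S.i1_ne, S.hφ'g S.i1 S.i1_ne, S.hφe S.i0 S.i0_ne, S.hφ'e S.i0 S.i0_ne]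
      simp only [sub_mul, add_mul, mul_sub, mul_add, mul_assoc]
      all_goals abel
    · simp only [S.hφg j hj, S.tg_ne hj, S.tg'_ne hj, map_add, map_sub, map_mul, LinearMap.add_apply, LinearMap.sub_apply, Module.End.mul_apply, sigma_e, sigma_g, rho_e, rho_g, sigma_p, rho_p, S.tg_i0, S.tg'_i0, S.tg_ne S.i1_ne, S.tg'_ne S.i1_ne, S.phi_p, S.phi'_p, S.hinv1, S.hinv2, S.hφe2', S.hφg1', S.hφ'e2', S.hφ'g1', S.hφg S.i1 S.i1_ne, S.hφ'g S.i1 S.i1_ne, S.hφe S.i0 S.i0_ne, S.hφ'e S.i0 S.i0_ne]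

lemma rho_phi'_letter (x : RGen n) (z : LRose K n) :
    rho S (S.φ' (lv K n x)) (S.φ' z) = S.φ' (rho S (lv K n x) z) := by
  cases x with
  | e i =>
    rw [lv_e]
    by_cases hi : (i : ℕ) = 1
    · have hi' : i = S.i1 := Fin.ext hi
      subst hi'
      simp only [map_add, map_sub, map_mul, LinearMap.add_apply, LinearMap.sub_apply, Module.End.mul_apply, sigma_e, sigma_g, rho_e, rho_g, sigma_p, rho_p, S.tg_i0, S.tg'_i0, S.tg_ne S.i1_ne, S.tg'_ne S.i1_ne, S.phi_p, S.phi'_p, S.hinv1, S.hinv2, S.hφe2', S.hφg1', S.hφ'e2', S.hφ'g1', S.hφg S.i1 S.i1_ne, S.hφ'g S.i1 S.i1_ne, S.hφe S.i0 S.i0_ne, S.hφ'e S.i0 S.i0_ne]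
      simp only [sub_mul, add_mul, mul_sub, mul_add, mul_assoc]
      all_goals abel
    · simp only [S.hφ'e i hi, map_add, map_sub, map_mul, LinearMap.add_apply, LinearMap.sub_apply, Module.End.mul_apply, sigma_e, sigma_g, rho_e, rho_g, sigma_p, rho_p, S.tg_i0, S.tg'_i0, S.tg_ne S.i1_ne, S.tg'_ne S.i1_ne, S.phi_p, S.phi'_p, S.hinv1, S.hinv2, S.hφe2', S.hφg1', S.hφ'e2', S.hφ'g1', S.hφg S.i1 S.i1_ne, S.hφ'g S.i1 S.i1_ne, S.hφe S.i0 S.i0_ne, S.hφ'e S.i0 S.i0_ne]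
  | g j =>
    rw [lv_g]
    by_cases hj : (j : ℕ) = 0
    · have hj' : j = S.i0 := Fin.ext hj
      subst hj'
      simp only [map_add, map_sub, map_mul, LinearMap.add_apply, LinearMap.sub_apply, Module.End.mul_apply, sigma_e, sigma_g, rho_e, rho_g, sigma_p, rho_p, S.tg_i0, S.tg'_i0, S.tg_ne S.i1_ne, S.tg'_ne S.i1_ne, S.phi_p, S.phi'_p, S.hinv1, S.hinv2, S.hφe2', S.hφg1', S.hφ'e2', S.hφ'g1', S.hφg S.i1 S.i1_ne, S.hφ'g S.i1 S.i1_ne, S.hφe S.i0 S.i0_ne, S.hφ'e S.i0 S.i0_ne]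
      simp only [sub_mul, add_mul, mul_sub, mul_add, mul_assoc]
      all_goals abel
    · simp only [S.hφ'g j hj, S.tg_ne hj, S.tg'_ne hj, map_add, map_sub, map_mul, LinearMap.add_apply, LinearMap.sub_apply, Module.End.mul_apply, sigma_e, sigma_g, rho_e, rho_g, sigma_p, rho_p, S.tg_i0, S.tg'_i0, S.tg_ne S.i1_ne, S.tg'_ne S.i1_ne, S.phi_p, S.phi'_p, S.hinv1, S.hinv2, S.hφe2', S.hφg1', S.hφ'e2', S.hφ'g1', S.hφg S.i1 S.i1_ne, S.hφ'g S.i1 S.i1_ne, S.hφe S.i0 S.i0_ne, S.hφ'e S.i0 S.i0_ne]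

end Setup

namespace Setup

variable {K : Type} [Field K] {n : ℕ} (S : Setup K n)

lemma sigma_phi (z y : LRose K n) :
    sigma S (S.φ z) y = S.φ (sigma S z (S.φ' y)) := by
  have hword : ∀ l (y : LRose K n),
      sigma S (S.φ (wv K n l)) y = S.φ (sigma S (wv K n l) (S.φ' y)) := by
    intro l
    induction l with
    | nil =>
      intro y
      rw [wv_nil, map_one, map_one (sigma S)]
      show (1 : Module.End K (LRose K n)) y
        = S.φ ((1 : Module.End K (LRose K n)) (S.φ' y))
      rw [Module.End.one_apply, Module.End.one_apply, S.hinv1]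
    | cons x l ih =>
      intro y
      rw [wv_cons, map_mul, map_mul, map_mul, Module.End.mul_apply,
        Module.End.mul_apply, ih y, sigma_phi_letter]
  have h := mem_spanW K n z
  induction h using Submodule.span_induction with
  | mem x hx => obtain ⟨l, rfl⟩ := hx; exact hword l y
  | zero => simp
  | add a b _ _ ha hb =>
    rw [map_add, map_add (sigma S), LinearMap.add_apply, ha, hb,
      map_add (sigma S), LinearMap.add_apply, map_add]
  | smul c a _ ha =>
    rw [map_smul, map_smul (sigma S), LinearMap.smul_apply, ha,
      map_smul (sigma S), LinearMap.smul_apply, map_smul]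

lemma sigma_phi' (z y : LRose K n) :
    sigma S (S.φ' z) y = S.φ' (sigma S z (S.φ y)) := by
  have hword : ∀ l (y : LRose K n),
      sigma S (S.φ' (wv K n l)) y = S.φ' (sigma S (wv K n l) (S.φ y)) := by
    intro l
    induction l with
    | nil =>
      intro y
      rw [wv_nil, map_one, map_one (sigma S)]
      show (1 : Module.End K (LRose K n)) y
        = S.φ' ((1 : Module.End K (LRose K n)) (S.φ y))
      rw [Module.End.one_apply, Module.End.one_apply, S.hinv2]
    | cons x l ih =>
      intro y
      rw [wv_cons, map_mul, map_mul, map_mul, Module.End.mul_apply,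
        Module.End.mul_apply, ih y, sigma_phi'_letter]
  have h := mem_spanW K n z
  induction h using Submodule.span_induction with
  | mem x hx => obtain ⟨l, rfl⟩ := hx; exact hword l y
  | zero => simp
  | add a b _ _ ha hb =>
    rw [map_add, map_add (sigma S), LinearMap.add_apply, ha, hb,
      map_add (sigma S), LinearMap.add_apply, map_add]
  | smul c a _ ha =>
    rw [map_smul, map_smul (sigma S), LinearMap.smul_apply, ha,
      map_smul (sigma S), LinearMap.smul_apply, map_smul]

lemma rho_phi (z y : LRose K n) :
    rho S (S.φ z) y = S.φ (rho S z (S.φ' y)) := by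
  have hword : ∀ l (y : LRose K n),
      rho S (S.φ (wv K n l)) y = S.φ (rho S (wv K n l) (S.φ' y)) := by
    intro l
    induction l with
    | nil =>
      intro y
      rw [wv_nil, map_one, map_one (rho S)]
      show (1 : Module.End K (LRose K n)) y
        = S.φ ((1 : Module.End K (LRose K n)) (S.φ' y))
      rw [Module.End.one_apply, Module.End.one_apply, S.hinv1]
    | cons x l ih =>
      intro y
      rw [wv_cons, map_mul, map_mul, map_mul, Module.End.mul_apply,
        Module.End.mul_apply, ih y, rho_phi_letter]
  have h := mem_spanW K n z
  induction h using Submodule.span_induction with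
  | mem x hx => obtain ⟨l, rfl⟩ := hx; exact hword l y
  | zero => simp
  | add a b _ _ ha hb =>
    rw [map_add, map_add (rho S), LinearMap.add_apply, ha, hb,
      map_add (rho S), LinearMap.add_apply, map_add]
  | smul c a _ ha =>
    rw [map_smul, map_smul (rho S), LinearMap.smul_apply, ha,
      map_smul (rho S), LinearMap.smul_apply, map_smul]

lemma rho_phi' (z y : LRose K n) :
    rho S (S.φ' z) y = S.φ' (rho S z (S.φ y)) := by
  have hword : ∀ l (y : LRose K n),
      rho S (S.φ' (wv K n l)) y = S.φ' (rho S (wv K n l) (S.φ y)) := by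
    intro l
    induction l with
    | nil =>
      intro y
      rw [wv_nil, map_one, map_one (rho S)]
      show (1 : Module.End K (LRose K n)) y
        = S.φ' ((1 : Module.End K (LRose K n)) (S.φ y))
      rw [Module.End.one_apply, Module.End.one_apply, S.hinv2]
    | cons x l ih =>
      intro y
      rw [wv_cons, map_mul, map_mul, map_mul, Module.End.mul_apply,
        Module.End.mul_apply, ih y, rho_phi'_letter]
  have h := mem_spanW K n z
  induction h using Submodule.span_induction with
  | mem x hx => obtain ⟨l, rfl⟩ := hx; exact hword l y
  | zero => simp
  | add a b _ _ ha hb =>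
    rw [map_add, map_add (rho S), LinearMap.add_apply, ha, hb,
      map_add (rho S), LinearMap.add_apply, map_add]
  | smul c a _ ha =>
    rw [map_smul, map_smul (rho S), LinearMap.smul_apply, ha,
      map_smul (rho S), LinearMap.smul_apply, map_smul]

end Setup

namespace Setup

variable {K : Type} [Field K] {n : ℕ} (S : Setup K n)

lemma sigma_e_phi (i : Fin n) (z : LRose K n) :
    sigma S (ee K n i) (S.φ z) = ee K n i * z := by
  rw [sigma_e, S.hinv2]

lemma sigma_tg_phi' (j : Fin n) (z : LRose K n) :
    sigma S (S.tg j) (S.φ' z) = gg K n j * z := by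
  by_cases hj : (j : ℕ) = 0
  · have hj' : j = S.i0 := Fin.ext hj
    subst hj'
    simp only [S.tg_i0, map_add, map_mul, LinearMap.add_apply,
      Module.End.mul_apply, sigma_g, sigma_p, S.tg'_i0, S.tg'_ne S.i1_ne, S.hinv1]
    simp only [sub_mul, mul_assoc]
    abel
  · rw [S.tg_ne hj, sigma_g, S.tg'_ne hj, S.hinv1]

lemma sigma_theta_word (l : List (RGen n)) (y : LRose K n) :
    sigma S (S.θ (wv K n l)) y = wv K n l * S.Φ (-(wd n l)) y := by
  induction l generalizing y with
  | nil =>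
    rw [wv_nil, S.hone, map_one (sigma S), Module.End.one_apply, wd_nil, neg_zero,
      S.Φ_zero, one_mul]
  | cons x l ih =>
    cases x with
    | e i =>
      have harg : -(wd n (RGen.e i :: l)) = -(wd n l) - 1 := by
        rw [wd_cons]
        show -((1 : ℤ) + wd n l) = _
        ring
      rw [wv_cons, lv_e, theta_e_mul, map_mul (sigma S), Module.End.mul_apply,
        sigma_phi, ih, S.Φ_comp_phi', sigma_e_phi, harg, mul_assoc]
    | g j =>
      have harg : -(wd n (RGen.g j :: l)) = -(wd n l) + 1 := by
        rw [wd_cons]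
        show -((-1 : ℤ) + wd n l) = _
        ring
      rw [wv_cons, lv_g, theta_g_mul, map_mul (sigma S), Module.End.mul_apply,
        sigma_phi', ih, S.Φ_comp_phi, sigma_tg_phi', harg, mul_assoc]

/-- the candidate inverse of θ -/
noncomputable def ith (a : LRose K n) : LRose K n := sigma S a 1

lemma rho_tg' (j : Fin n) (z : LRose K n) :
    rho S (S.tg' j) z = gg K n j * S.φ' z := by
  by_cases hj : (j : ℕ) = 0
  · have hj' : j = S.i0 := Fin.ext hj
    subst hj'
    simp only [S.tg'_i0, map_sub, map_mul, LinearMap.sub_apply,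
      Module.End.mul_apply, rho_g, rho_p, S.tg_i0, S.tg_ne S.i1_ne]
    simp only [add_mul, mul_assoc]
    abel
  · rw [S.tg'_ne hj, rho_g, S.tg_ne hj]

lemma rho_ith_word (l : List (RGen n)) (y : LRose K n) :
    rho S (ith S (wv K n l)) y = wv K n l * S.Φ (wd n l) y := by
  induction l generalizing y with
  | nil =>
    rw [wv_nil, ith, map_one (sigma S), Module.End.one_apply, map_one (rho S),
      Module.End.one_apply, wd_nil, S.Φ_zero, one_mul]
  | cons x l ih =>
    have hsplit : ith S (wv K n (x :: l)) = sigma S (lv K n x) (ith S (wv K n l)) := by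
      rw [ith, ith, wv_cons, map_mul (sigma S), Module.End.mul_apply]
    rw [hsplit]
    cases x with
    | e i =>
      have harg : wd n (RGen.e i :: l) = wd n l + 1 := by
        rw [wd_cons]
        show (1 : ℤ) + wd n l = _
        ring
      rw [lv_e, sigma_e, map_mul (rho S), Module.End.mul_apply, rho_phi',
        rho_e, S.hinv1, ih, S.Φ_comp_phi, harg, wv_cons, lv_e, mul_assoc]
    | g j =>
      have harg : wd n (RGen.g j :: l) = wd n l - 1 := by
        rw [wd_cons]
        show (-1 : ℤ) + wd n l = _
        ring
      rw [lv_g, sigma_g, map_mul (rho S), Module.End.mul_apply, rho_phi,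
        rho_tg', S.hinv2, ih, S.Φ_comp_phi', harg, wv_cons, lv_g, mul_assoc]

lemma ith_add (a b : LRose K n) : ith S (a + b) = ith S a + ith S b := by
  rw [ith, ith, ith, map_add (sigma S), LinearMap.add_apply]

lemma ith_smul (c : K) (a : LRose K n) : ith S (c • a) = c • ith S a := by
  rw [ith, ith, map_smul (sigma S), LinearMap.smul_apply]

lemma left_inv (a : LRose K n) : ith S (S.θ a) = a := by
  have h := mem_spanW K n a
  induction h using Submodule.span_induction with
  | mem x hx =>
    obtain ⟨l, rfl⟩ := hx
    rw [ith, sigma_theta_word, S.Φ_one, mul_one]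
  | zero => rw [map_zero, ith, map_zero (sigma S)]; rfl
  | add a b _ _ ha hb => rw [map_add, ith_add, ha, hb]
  | smul c a _ ha => rw [map_smul, ith_smul, ha]

lemma right_inv (a : LRose K n) : S.θ (ith S a) = a := by
  have h := mem_spanW K n a
  induction h using Submodule.span_induction with
  | mem x hx =>
    obtain ⟨l, rfl⟩ := hx
    rw [← rho_one, rho_ith_word, S.Φ_one, mul_one]
  | zero =>
    have : ith S (0 : LRose K n) = 0 := by rw [ith, map_zero (sigma S)]; rfl
    rw [this, map_zero]
  | add a b _ _ ha hb => rw [ith_add, map_add, ha, hb]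
  | smul c a _ ha => rw [ith_smul, map_smul, ha]

end Setup

end S16

/-- For every `p ∈ A_{R_n}(e_1, e_2) ∩ L_K(R_n)_0`, the homomorphism
`θ_p : L_K(R_n) → L_K(R_n)^{φ_{U_p}}` determined by `θ_p(1) = 1`, `θ_p(e_i) = e_i`,
`θ_p(e_j*) = e_j*` for `j ≥ 2` and `θ_p(e_1*) = e_1* + p e_2*` is an isomorphism. -/
theorem stmt16 (K : Type) [Field K] (n : ℕ) (hn : 2 ≤ n)
    (p : LRose K n) (hpA : p ∈ roseA K n) (hp0 : p ∈ rComponent K n 0)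
    (φ φ' : LRose K n →ₐ[K] LRose K n)
    (hφe : ∀ i : Fin n, (i : ℕ) ≠ 1 → φ (ee K n i) = ee K n i)
    (hφg : ∀ j : Fin n, (j : ℕ) ≠ 0 → φ (gg K n j) = gg K n j)
    (hφe2 : φ (ee K n ⟨1, by omega⟩) = ee K n ⟨1, by omega⟩ + ee K n ⟨0, by omega⟩ * p)
    (hφg1 : φ (gg K n ⟨0, by omega⟩) = gg K n ⟨0, by omega⟩ - p * gg K n ⟨1, by omega⟩)
    (hφ'e : ∀ i : Fin n, (i : ℕ) ≠ 1 → φ' (ee K n i) = ee K n i)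
    (hφ'g : ∀ j : Fin n, (j : ℕ) ≠ 0 → φ' (gg K n j) = gg K n j)
    (hφ'e2 : φ' (ee K n ⟨1, by omega⟩) = ee K n ⟨1, by omega⟩ - ee K n ⟨0, by omega⟩ * p)
    (hφ'g1 : φ' (gg K n ⟨0, by omega⟩) = gg K n ⟨0, by omega⟩ + p * gg K n ⟨1, by omega⟩)
    (hinv : ∀ x, φ (φ' x) = x ∧ φ' (φ x) = x)
    (θ : LRose K n →ₗ[K] LRose K n)
    (hone : θ 1 = 1)
    (hmulPos : ∀ m : ℕ, ∀ a ∈ rComponent K n (m : ℤ), ∀ b,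
      θ (a * b) = θ a * (⇑φ)^[m] (θ b))
    (hmulNeg : ∀ m : ℕ, ∀ a ∈ rComponent K n (-(m : ℤ)), ∀ b,
      θ (a * b) = θ a * (⇑φ')^[m] (θ b))
    (hθe : ∀ i, θ (ee K n i) = ee K n i)
    (hθg : ∀ j : Fin n, (j : ℕ) ≠ 0 → θ (gg K n j) = gg K n j)
    (hθg1 : θ (gg K n ⟨0, by omega⟩) =
      gg K n ⟨0, by omega⟩ + p * gg K n ⟨1, by omega⟩) :
    Function.Bijective ⇑θ := by
  let S : S16.Setup K n :=
    ⟨hn, p, hpA, hp0, φ, φ', hφe, hφg, hφe2, hφg1, hφ'e, hφ'g, hφ'e2, hφ'g1,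
      hinv, θ, hone, hmulPos, hmulNeg, hθe, hθg, hθg1⟩
  exact ⟨Function.LeftInverse.injective (S16.Setup.left_inv S),
    Function.RightInverse.surjective (S16.Setup.right_inv S)⟩
end

section
/- Let n ≥ 2 be an integer, K a field, R_n the rose graph with n petals, and u a unit of the degree-zero component L_K(R_n)_0 such that u^{-1} = f_u(w) for some unit w of L_K(R_n)_0 (so f_u is a graded automorphism). Set P := (e_i* u e_j)_{1 ≤ i,j ≤ n} ∈ GL_n(L_K(R_n)_0), and for m ≥ 1 define u_m := f_u^{m-1}(u) ⋯ f_u(u) u and P_m := P f_u(P) ⋯ f_u^{m-1}(P). Then P_m = (e_i* u_m e_j)_{1 ≤ i,j ≤ n} and P_m^{-1} = (e_i* u_m^{-1} e_j)_{1 ≤ i,j ≤ n} for all m ≥ 1. -/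
/-- Let `u` be a unit of `L_K(R_n)_0` with `u^{-1} = f_u(w)` for some
unit `w` of `L_K(R_n)_0`, let `P = (e_i* u e_j)`, and set
`u_m = f_u^{m-1}(u) ⋯ f_u(u) u` and `P_m = P f_u(P) ⋯ f_u^{m-1}(P)`.  Then
`P_m = (e_i* u_m e_j)` and `P_m^{-1} = (e_i* u_m^{-1} e_j)` for all `m ≥ 1`. -/
theorem stmt17 (K : Type) [Field K] (n : ℕ) (hn : 2 ≤ n)
    (u u' : LRose K n) (hu0 : u ∈ rComponent K n 0) (hu'0 : u' ∈ rComponent K n 0)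
    (huu' : u * u' = 1) (hu'u : u' * u = 1)
    (fu : LRose K n →ₐ[K] LRose K n)
    (hfue : ∀ i, fu (ee K n i) = u * ee K n i)
    (hfug : ∀ i, fu (gg K n i) = gg K n i * u')
    (w w' : LRose K n) (hw0 : w ∈ rComponent K n 0) (hw'0 : w' ∈ rComponent K n 0)
    (hww' : w * w' = 1) (hw'w : w' * w = 1) (hw : u' = fu w)
    (um um' : ℕ → LRose K n)
    (hum1 : um 1 = u) (humS : ∀ m, 1 ≤ m → um (m + 1) = (⇑fu)^[m] u * um m)
    (hum'1 : um' 1 = u') (hum'S : ∀ m, 1 ≤ m → um' (m + 1) = um' m * (⇑fu)^[m] u')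
    (Pm : ℕ → Matrix (Fin n) (Fin n) (LRose K n))
    (hPm1 : Pm 1 = Matrix.of fun i j => gg K n i * u * ee K n j)
    (hPmS : ∀ m, 1 ≤ m →
      Pm (m + 1) = Pm m * (Matrix.of fun i j => gg K n i * u * ee K n j).map ((⇑fu)^[m])) :
    ∀ m, 1 ≤ m →
      Pm m = (Matrix.of fun i j => gg K n i * um m * ee K n j) ∧
      Pm m * (Matrix.of fun i j => gg K n i * um' m * ee K n j) = 1 ∧
      (Matrix.of fun i j => gg K n i * um' m * ee K n j) * Pm m = 1 := by
  -- basic relations in the Leavitt path algebra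
  have hge : ∀ i j : Fin n, gg K n i * ee K n j = if i = j then 1 else 0 := by
    intro i j
    by_cases h : i = j
    · subst h
      rw [if_pos rfl]
      simp only [gg, ee, ← map_mul]
      rw [RingQuot.mkAlgHom_rel K (RoseRel.ghostEdgeSame i), map_one]
    · simp only [if_neg h, gg, ee, ← map_mul]
      rw [RingQuot.mkAlgHom_rel K (RoseRel.ghostEdgeNe i j h), map_zero]
  have hsum : ∑ i : Fin n, ee K n i * gg K n i = 1 := by
    simp only [ee, gg, ← map_mul, ← map_sum]
    rw [RingQuot.mkAlgHom_rel K RoseRel.ck2, map_one]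
  -- key matrix multiplication lemma
  have hmulmat : ∀ x y : LRose K n,
      (Matrix.of fun i j => gg K n i * x * ee K n j) *
        (Matrix.of fun i j => gg K n i * y * ee K n j)
      = Matrix.of fun i j => gg K n i * (x * y) * ee K n j := by
    intro x y
    ext i j
    rw [Matrix.mul_apply]
    simp only [Matrix.of_apply]
    have : ∀ k : Fin n, gg K n i * x * ee K n k * (gg K n k * y * ee K n j)
        = gg K n i * x * (ee K n k * gg K n k) * (y * ee K n j) := by
      intro k; noncomm_ring
    rw [Finset.sum_congr rfl fun k _ => this k]
    have : ∑ k : Fin n, gg K n i * x * (ee K n k * gg K n k) * (y * ee K n j)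
        = gg K n i * x * (∑ k : Fin n, ee K n k * gg K n k) * (y * ee K n j) := by
      rw [Finset.mul_sum, Finset.sum_mul]
    rw [this, hsum, mul_one]
    noncomm_ring
  have hidmat : (Matrix.of fun i j => gg K n i * (1 : LRose K n) * ee K n j)
      = (1 : Matrix (Fin n) (Fin n) (LRose K n)) := by
    ext i j
    simp [Matrix.one_apply, hge i j]
  -- iterates of fu multiply
  have hiter_mul : ∀ m (x y : LRose K n),
      (⇑fu)^[m] (x * y) = (⇑fu)^[m] x * (⇑fu)^[m] y := by
    intro m
    induction m with
    | zero => intro x y; simp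
    | succ m ih =>
      intro x y
      simp only [Function.iterate_succ_apply, map_mul]
      exact ih _ _
  have hiter_e : ∀ m, 1 ≤ m → ∀ j, (⇑fu)^[m] (ee K n j) = um m * ee K n j := by
    intro m hm
    induction m with
    | zero => omega
    | succ m ih =>
      intro j
      rcases Nat.eq_or_lt_of_le hm with h | h
      · have hm0 : m = 0 := by omega
        subst hm0
        simp [hfue j, hum1]
      · have hm1 : 1 ≤ m := by omega
        rw [Function.iterate_succ_apply, hfue j, hiter_mul, ih hm1, humS m hm1,
          mul_assoc]
  have hiter_g : ∀ m, 1 ≤ m → ∀ j, (⇑fu)^[m] (gg K n j) = gg K n j * um' m := by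
    intro m hm
    induction m with
    | zero => omega
    | succ m ih =>
      intro j
      rcases Nat.eq_or_lt_of_le hm with h | h
      · have hm0 : m = 0 := by omega
        subst hm0
        simp [hfug j, hum'1]
      · have hm1 : 1 ≤ m := by omega
        rw [Function.iterate_succ_apply, hfug j, hiter_mul, ih hm1, hum'S m hm1,
          mul_assoc]
  have huu'iter : ∀ m, (⇑fu)^[m] u * (⇑fu)^[m] u' = 1 ∧ (⇑fu)^[m] u' * (⇑fu)^[m] u = 1 := by
    intro m
    constructor
    · rw [← hiter_mul, huu']
      induction m with
      | zero => rfl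
      | succ m ih => rw [Function.iterate_succ_apply, map_one, ih]
    · rw [← hiter_mul, hu'u]
      induction m with
      | zero => rfl
      | succ m ih => rw [Function.iterate_succ_apply, map_one, ih]
  -- um' m is inverse of um m
  have hinv : ∀ m, 1 ≤ m → um m * um' m = 1 ∧ um' m * um m = 1 := by
    intro m hm
    induction m with
    | zero => omega
    | succ m ih =>
      rcases Nat.eq_or_lt_of_le hm with h | h
      · have hm0 : m = 0 := by omega
        subst hm0
        constructor
        · rw [hum1, hum'1, huu']
        · rw [hum1, hum'1, hu'u]
      · have hm1 : 1 ≤ m := by omega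
        obtain ⟨ih1, ih2⟩ := ih hm1
        constructor
        · rw [humS m hm1, hum'S m hm1]
          calc (⇑fu)^[m] u * um m * (um' m * (⇑fu)^[m] u')
              = (⇑fu)^[m] u * (um m * um' m) * (⇑fu)^[m] u' := by noncomm_ring
            _ = 1 := by rw [ih1, mul_one, (huu'iter m).1]
        · rw [humS m hm1, hum'S m hm1]
          calc um' m * (⇑fu)^[m] u' * ((⇑fu)^[m] u * um m)
              = um' m * ((⇑fu)^[m] u' * (⇑fu)^[m] u) * um m := by noncomm_ring
            _ = 1 := by rw [(huu'iter m).2, mul_one, ih2]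
  -- the key identification of Pm
  have hmain : ∀ m, 1 ≤ m →
      Pm m = Matrix.of fun i j => gg K n i * um m * ee K n j := by
    intro m hm
    induction m with
    | zero => omega
    | succ m ih =>
      rcases Nat.eq_or_lt_of_le hm with h | h
      · have hm0 : m = 0 := by omega
        subst hm0
        rw [hPm1, hum1]
      · have hm1 : 1 ≤ m := by omega
        rw [hPmS m hm1, ih hm1]
        have hmap : (Matrix.of fun i j => gg K n i * u * ee K n j).map ((⇑fu)^[m])
            = Matrix.of fun i j =>
                gg K n i * (um' m * ((⇑fu)^[m] u * um m)) * ee K n j := by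
          ext i j
          simp only [Matrix.map_apply, Matrix.of_apply]
          rw [hiter_mul, hiter_mul, hiter_e m hm1, hiter_g m hm1]
          noncomm_ring
        rw [hmap, hmulmat]
        have : um m * (um' m * ((⇑fu)^[m] u * um m)) = um (m + 1) := by
          calc um m * (um' m * ((⇑fu)^[m] u * um m))
              = um m * um' m * ((⇑fu)^[m] u * um m) := by noncomm_ring
            _ = (⇑fu)^[m] u * um m := by rw [(hinv m hm1).1, one_mul]
            _ = um (m + 1) := (humS m hm1).symm
        rw [this]
  intro m hm
  refine ⟨hmain m hm, ?_, ?_⟩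
  · rw [hmain m hm, hmulmat, (hinv m hm).1, hidmat]
  · rw [hmain m hm, hmulmat, (hinv m hm).2, hidmat]
end

section
/- Let n ≥ 2 be an integer, K a field, R_n the rose graph with n petals, P = (p_{ij}) ∈ GL_n(K), and let α = e_{i_1} e_{i_2} ⋯ e_{i_m} ⋯ be an irrational infinite path in R_n in which every edge occurs infinitely often. Then the twisted Chen module V^P_{[α]} is isomorphic as a left L_K(R_n)-module to the quotient L_K(R_n) / ⊕_{m=0}^∞ L_K(R_n)(φ_P(ε_m) − φ_P(ε_{m+1})), where ε_0 := v and ε_m := e_{i_1} ⋯ e_{i_m} e_{i_m}* ⋯ e_{i_1}* for m ≥ 1. Consequently, V^P_{[α]} is a simple left L_K(R_n)-module that is not finitely presented. -/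
/-- An infinite path in the rose `R_n` is a sequence `ℕ → Fin n` of edges.
Two infinite paths are tail-equivalent if they agree after deleting suitable finite
initial segments. -/
def TailEq (n : ℕ) (β γ : ℕ → Fin n) : Prop :=
  ∃ m k : ℕ, ∀ t, β (m + t) = γ (k + t)

/-- Prepend the edge `i` to an infinite path. -/
def consSeq {n : ℕ} (i : Fin n) (β : ℕ → Fin n) : ℕ → Fin n :=
  fun t => Nat.casesOn t i β

/-- Delete the first edge of an infinite path. -/
def shiftSeq {n : ℕ} (β : ℕ → Fin n) : ℕ → Fin n :=
  fun t => β (t + 1)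

/-- An infinite path in `R_n` is rational iff it is tail-equivalent to `c^∞` for a
closed path `c`, i.e. iff it is eventually periodic. -/
def RationalSeq (n : ℕ) (α : ℕ → Fin n) : Prop :=
  ∃ p m : ℕ, 0 < p ∧ ∀ t, m ≤ t → α (t + p) = α t

/-- Every edge of `R_n` occurs infinitely often in the infinite path `α`. -/
def EdgeRich (n : ℕ) (α : ℕ → Fin n) : Prop :=
  ∀ j : Fin n, ∀ m : ℕ, ∃ t, m ≤ t ∧ α t = j

section RoseAlg
variable (K : Type) [Field K] (n : ℕ)

lemma gg_mul_ee (i j : Fin n) : gg K n i * ee K n j = if i = j then 1 else 0 := by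
  by_cases h : i = j
  · subst h
    simp only [gg, ee, ← map_mul, if_true]
    rw [RingQuot.mkAlgHom_rel K (RoseRel.ghostEdgeSame i), map_one]
  · simp only [if_neg h, gg, ee, ← map_mul]
    rw [RingQuot.mkAlgHom_rel K (RoseRel.ghostEdgeNe i j h), map_zero]

lemma sum_ee_gg : (∑ i : Fin n, ee K n i * gg K n i) = 1 := by
  have := RingQuot.mkAlgHom_rel K (RoseRel.ck2 (K := K) (n := n))
  simpa only [ee, gg, map_sum, map_mul, map_one] using this

end RoseAlg

noncomputable def EP (K : Type) [Field K] (n : ℕ) (l : List (Fin n)) : LRose K n :=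
  (l.map (ee K n)).prod

noncomputable def GP (K : Type) [Field K] (n : ℕ) (l : List (Fin n)) : LRose K n :=
  (l.reverse.map (gg K n)).prod

section Lists
variable (K : Type) [Field K] (n : ℕ)

@[simp] lemma EP_nil : EP K n [] = 1 := rfl
@[simp] lemma GP_nil : GP K n [] = 1 := rfl

lemma EP_cons (i : Fin n) (l : List (Fin n)) : EP K n (i :: l) = ee K n i * EP K n l := by
  simp [EP]

lemma GP_cons (i : Fin n) (l : List (Fin n)) : GP K n (i :: l) = GP K n l * gg K n i := by
  simp [GP]

lemma EP_append (l l' : List (Fin n)) : EP K n (l ++ l') = EP K n l * EP K n l' := by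
  simp [EP]

lemma GP_append (l l' : List (Fin n)) : GP K n (l ++ l') = GP K n l' * GP K n l := by
  simp [GP]

lemma GP_mul_EP (q p : List (Fin n)) :
    GP K n q * EP K n p = 0 ∨ (∃ r, p = q ++ r ∧ GP K n q * EP K n p = EP K n r) ∨
      (∃ r, q = p ++ r ∧ GP K n q * EP K n p = GP K n r) := by
  induction q generalizing p with
  | nil =>
    right; left; exact ⟨p, rfl, by simp⟩
  | cons i q' ih =>
    cases p with
    | nil => right; right; exact ⟨i :: q', rfl, by simp⟩
    | cons j p' =>
      have key : GP K n (i :: q') * EP K n (j :: p')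
          = GP K n q' * ((gg K n i * ee K n j) * EP K n p') := by
        rw [GP_cons, EP_cons, mul_assoc, mul_assoc]
      by_cases h : i = j
      · subst h
        rw [gg_mul_ee, if_pos rfl, one_mul] at key
        rcases ih p' with h0 | ⟨r, hr, he⟩ | ⟨r, hr, he⟩
        · left; rw [key, h0]
        · right; left; exact ⟨r, by rw [hr]; rfl, by rw [key, he]⟩
        · right; right; exact ⟨r, by rw [hr]; rfl, by rw [key, he]⟩
      · left
        rw [gg_mul_ee, if_neg h] at key
        simp at key
        exact key

lemma GP_mul_EP_prefix (q r : List (Fin n)) :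
    GP K n q * EP K n (q ++ r) = EP K n r := by
  induction q with
  | nil => simp
  | cons i q' ih =>
    have : GP K n (i :: q') * EP K n ((i :: q') ++ r)
        = GP K n q' * ((gg K n i * ee K n i) * EP K n (q' ++ r)) := by
      rw [GP_cons, List.cons_append, EP_cons, mul_assoc, mul_assoc]
    rw [this, gg_mul_ee, if_pos rfl, one_mul, ih]

end Lists

noncomputable def monSpan (K : Type) [Field K] (n : ℕ) : Submodule K (LRose K n) :=
  Submodule.span K {x : LRose K n | ∃ p q : List (Fin n), x = EP K n p * GP K n q}

section Span
variable (K : Type) [Field K] (n : ℕ)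

lemma mon_mem (p q : List (Fin n)) : EP K n p * GP K n q ∈ monSpan K n :=
  Submodule.subset_span ⟨p, q, rfl⟩

lemma monSpan_mul_mem : ∀ x ∈ monSpan K n, ∀ y ∈ monSpan K n, x * y ∈ monSpan K n := by
  intro x hx y hy
  induction hx using Submodule.span_induction with
  | mem x hx =>
    induction hy using Submodule.span_induction with
    | mem y hy =>
      obtain ⟨p, q, rfl⟩ := hx
      obtain ⟨p', q', rfl⟩ := hy
      have key : EP K n p * GP K n q * (EP K n p' * GP K n q')
          = EP K n p * (GP K n q * EP K n p') * GP K n q' := by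
        rw [mul_assoc, mul_assoc, mul_assoc]
      rcases GP_mul_EP K n q p' with h0 | ⟨r, _, he⟩ | ⟨r, _, he⟩
      · rw [key, h0, mul_zero, zero_mul]; exact (monSpan K n).zero_mem
      · rw [key, he, ← EP_append]; exact mon_mem K n _ _
      · rw [key, he, mul_assoc, ← GP_append]; exact mon_mem K n _ _
    | zero => rw [mul_zero]; exact (monSpan K n).zero_mem
    | add y z _ _ hy hz => rw [mul_add]; exact (monSpan K n).add_mem hy hz
    | smul k y _ hy => rw [mul_smul_comm]; exact (monSpan K n).smul_mem k hy
  | zero => rw [zero_mul]; exact (monSpan K n).zero_mem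
  | add x z _ _ hx hz => rw [add_mul]; exact (monSpan K n).add_mem hx hz
  | smul k x _ hx => rw [smul_mul_assoc]; exact (monSpan K n).smul_mem k hx

lemma monSpan_eq_top (x : LRose K n) : x ∈ monSpan K n := by
  obtain ⟨y, rfl⟩ := RingQuot.mkAlgHom_surjective K (RoseRel K n) x
  induction y using FreeAlgebra.induction with
  | grade0 r =>
    rw [AlgHom.commutes]
    have h1 : (1 : LRose K n) ∈ monSpan K n := by
      have := mon_mem K n ([] : List (Fin n)) []
      simpa using this
    have : algebraMap K (LRose K n) r = r • 1 := by rw [Algebra.algebraMap_eq_smul_one]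
    rw [this]
    exact (monSpan K n).smul_mem r h1
  | grade1 z =>
    cases z with
    | e i =>
      have := mon_mem K n [i] []
      simpa [ee, EP_cons] using this
    | g i =>
      have := mon_mem K n [] [i]
      simpa [gg, GP_cons] using this
  | mul a b ha hb => rw [map_mul]; exact monSpan_mul_mem K n _ ha _ hb
  | add a b ha hb => rw [map_add]; exact (monSpan K n).add_mem ha hb


def appendSeq {n : ℕ} (l : List (Fin n)) (β : ℕ → Fin n) : ℕ → Fin n :=
  l.foldr consSeq β

def dropSeq {n : ℕ} (m : ℕ) (β : ℕ → Fin n) : ℕ → Fin n :=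
  fun t => β (t + m)

def preL {n : ℕ} (α : ℕ → Fin n) (m : ℕ) : List (Fin n) := (List.range m).map α

section Seq
variable {n : ℕ}

@[simp] lemma preL_length (α : ℕ → Fin n) (m : ℕ) : (preL α m).length = m := by
  simp [preL]

lemma preL_get (α : ℕ → Fin n) (m t : ℕ) (ht : t < (preL α m).length) :
    (preL α m).get ⟨t, ht⟩ = α t := by
  simp [preL]

@[simp] lemma appendSeq_nil (β : ℕ → Fin n) : appendSeq [] β = β := rfl

lemma appendSeq_cons (i : Fin n) (l : List (Fin n)) (β : ℕ → Fin n) :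
    appendSeq (i :: l) β = consSeq i (appendSeq l β) := rfl

@[simp] lemma consSeq_zero (i : Fin n) (β : ℕ → Fin n) : consSeq i β 0 = i := rfl
@[simp] lemma consSeq_succ (i : Fin n) (β : ℕ → Fin n) (t : ℕ) :
    consSeq i β (t + 1) = β t := rfl

lemma appendSeq_apply (l : List (Fin n)) (β : ℕ → Fin n) (t : ℕ) :
    appendSeq l β t = if h : t < l.length then l.get ⟨t, h⟩ else β (t - l.length) := by
  induction l generalizing t with
  | nil => simp
  | cons i l ih =>
    cases t with
    | zero => simp [appendSeq_cons]
    | succ t =>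
      rw [appendSeq_cons, consSeq_succ, ih]
      by_cases h : t < l.length
      · rw [dif_pos h, dif_pos (by simpa using Nat.succ_lt_succ h)]
        simp
      · rw [dif_neg h, dif_neg (by simpa using fun hh => h (Nat.lt_of_succ_lt_succ hh))]
        simp

lemma tailEq_refl (α : ℕ → Fin n) : TailEq n α α := ⟨0, 0, fun _ => rfl⟩

lemma tailEq_cons {α β : ℕ → Fin n} (i : Fin n) (h : TailEq n β α) :
    TailEq n (consSeq i β) α := by
  obtain ⟨m, k, h⟩ := h
  exact ⟨m + 1, k, fun t => by
    have : m + 1 + t = (m + t) + 1 := by omega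
    rw [this, consSeq_succ]; exact h t⟩

lemma tailEq_appendSeq {α β : ℕ → Fin n} (l : List (Fin n)) (h : TailEq n β α) :
    TailEq n (appendSeq l β) α := by
  induction l with
  | nil => simpa using h
  | cons i l ih => exact tailEq_cons i ih

lemma tailEq_shift {α β : ℕ → Fin n} (h : TailEq n β α) : TailEq n (shiftSeq β) α := by
  obtain ⟨m, k, h⟩ := h
  refine ⟨m, k + 1, fun t => ?_⟩
  show β (m + t + 1) = α (k + 1 + t)
  have e1 : m + t + 1 = m + (t + 1) := by omega
  have e2 : k + 1 + t = k + (t + 1) := by omega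
  rw [e1, e2]; exact h (t + 1)

lemma tailEq_drop {α β : ℕ → Fin n} (m : ℕ) (h : TailEq n β α) : TailEq n (dropSeq m β) α := by
  obtain ⟨M, k, h⟩ := h
  refine ⟨M, k + m, fun t => ?_⟩
  show β (M + t + m) = α (k + m + t)
  have e1 : M + t + m = M + (t + m) := by omega
  have e2 : k + m + t = k + (t + m) := by omega
  rw [e1, e2]; exact h (t + m)

lemma appendSeq_dropSeq {β : ℕ → Fin n} {l : List (Fin n)}
    (h : ∀ t (ht : t < l.length), β t = l.get ⟨t, ht⟩) :
    appendSeq l (dropSeq l.length β) = β := by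
  funext t
  rw [appendSeq_apply]
  by_cases ht : t < l.length
  · rw [dif_pos ht]; exact (h t ht).symm
  · rw [dif_neg ht]
    show β (t - l.length + l.length) = β t
    congr 1
    omega

lemma appendSeq_preL_dropSeq (α : ℕ → Fin n) (m : ℕ) :
    appendSeq (preL α m) (dropSeq m α) = α := by
  have := appendSeq_dropSeq (β := α) (l := preL α m)
    (fun t ht => (preL_get α m t ht).symm)
  simpa using this

end Seq

section Inj
variable {n : ℕ}

lemma append_lt_aux {α : ℕ → Fin n} (hirr : ¬ RationalSeq n α) (m : ℕ)
    {p p' : List (Fin n)} (hlt : p.length < p'.length)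
    (heq : appendSeq p (dropSeq m α) = appendSeq p' (dropSeq m α)) : False := by
  set s := dropSeq m α with hs
  set d := p'.length - p.length with hd
  have hdpos : 0 < d := by omega
  have key : ∀ w : ℕ, s (w + d) = s w := by
    intro w
    have h1 := congrFun heq (p'.length + w)
    rw [appendSeq_apply, appendSeq_apply] at h1
    rw [dif_neg (by omega), dif_neg (by omega)] at h1
    have e1 : p'.length + w - p.length = w + d := by omega
    have e2 : p'.length + w - p'.length = w := by omega
    rw [e1, e2] at h1
    exact h1
  apply hirr
  refine ⟨d, m, hdpos, fun t ht => ?_⟩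
  have h1 := key (t - m)
  have e1 : t - m + d + m = t + d := by omega
  have e2 : t - m + m = t := by omega
  simp only [hs, dropSeq] at h1
  rw [e1, e2] at h1
  exact h1

lemma appendSeq_inj {α : ℕ → Fin n} (hirr : ¬ RationalSeq n α) (m : ℕ)
    {p p' : List (Fin n)}
    (heq : appendSeq p (dropSeq m α) = appendSeq p' (dropSeq m α)) : p = p' := by
  rcases lt_trichotomy p.length p'.length with hlt | hl | hlt
  · exact absurd (append_lt_aux hirr m hlt heq) (fun h => h)
  · apply List.ext_get hl
    intro t h1 h2
    have := congrFun heq t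
    rw [appendSeq_apply, appendSeq_apply, dif_pos h1, dif_pos h2] at this
    exact this
  · exact absurd (append_lt_aux hirr m hlt heq.symm) (fun h => h)

end Inj

section Action
variable {K : Type} [Field K] {n : ℕ} {α : ℕ → Fin n}
variable {V : Type} [AddCommGroup V] [Module (LRose K n) V]
variable [Module K V] [IsScalarTower K (LRose K n) V]
variable (b : Module.Basis {β : ℕ → Fin n // TailEq n β α} K V)
variable (hactE : ∀ (i : Fin n) (β : {β : ℕ → Fin n // TailEq n β α})
      (h : TailEq n (consSeq i β.1) α),
        ee K n i • b β = b ⟨consSeq i β.1, h⟩)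
variable (hactG : ∀ (i : Fin n) (β : {β : ℕ → Fin n // TailEq n β α})
      (h0 : β.1 0 = i) (h : TailEq n (shiftSeq β.1) α),
        gg K n i • b β = b ⟨shiftSeq β.1, h⟩)
variable (hactG0 : ∀ (i : Fin n) (β : {β : ℕ → Fin n // TailEq n β α}),
      β.1 0 ≠ i → gg K n i • b β = 0)

include hactE in
lemma actE_list (l : List (Fin n)) (β : ℕ → Fin n) (hβ : TailEq n β α) :
    EP K n l • b ⟨β, hβ⟩ = b ⟨appendSeq l β, tailEq_appendSeq l hβ⟩ := by
  induction l with
  | nil => simp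
  | cons i l ih =>
    rw [EP_cons, mul_smul, ih]
    exact hactE i ⟨appendSeq l β, tailEq_appendSeq l hβ⟩
      (tailEq_cons i (tailEq_appendSeq l hβ))

include hactG in
lemma actG_list (l : List (Fin n)) (β : ℕ → Fin n) (hβ : TailEq n β α)
    (hpref : ∀ t (ht : t < l.length), β t = l.get ⟨t, ht⟩) :
    GP K n l • b ⟨β, hβ⟩ = b ⟨dropSeq l.length β, tailEq_drop l.length hβ⟩ := by
  induction l generalizing β with
  | nil => simp; rfl
  | cons i l ih =>
    rw [GP_cons, mul_smul]
    rw [hactG i ⟨β, hβ⟩ (hpref 0 (by simp)) (tailEq_shift hβ)]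
    rw [ih (shiftSeq β) (tailEq_shift hβ)
      (fun t ht => by
        show β (t + 1) = _
        have h2 : t + 1 < (i :: l).length := by simpa using Nat.succ_lt_succ ht
        have := hpref (t + 1) h2
        simpa using this)]
    rfl

include hactG hactG0 in
lemma actG_list_ne (l : List (Fin n)) (β : ℕ → Fin n) (hβ : TailEq n β α)
    (t : ℕ) (ht : t < l.length) (hne : β t ≠ l.get ⟨t, ht⟩) :
    GP K n l • b ⟨β, hβ⟩ = 0 := by
  induction l generalizing β t with
  | nil => simp at ht
  | cons i l ih =>
    rw [GP_cons, mul_smul]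
    cases t with
    | zero =>
      rw [hactG0 i ⟨β, hβ⟩ (by simpa using hne), smul_zero]
    | succ t =>
      by_cases h0 : β 0 = i
      · rw [hactG i ⟨β, hβ⟩ h0 (tailEq_shift hβ)]
        exact ih (shiftSeq β) (tailEq_shift hβ) t (by simpa using Nat.lt_of_succ_lt_succ ht)
          (by show β (t + 1) ≠ _; simpa using hne)
      · rw [hactG0 i ⟨β, hβ⟩ h0, smul_zero]
end Action

noncomputable def epsStd (K : Type) [Field K] (n : ℕ) (α : ℕ → Fin n) (m : ℕ) : LRose K n :=
  EP K n (preL α m) * GP K n (preL α m)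

noncomputable def NStd (K : Type) [Field K] (n : ℕ) (α : ℕ → Fin n) :
    Submodule (LRose K n) (LRose K n) :=
  Submodule.span (LRose K n)
    {x : LRose K n | ∃ m : ℕ, x = epsStd K n α m - epsStd K n α (m + 1)}

section Action2
variable {K : Type} [Field K] {n : ℕ} {α : ℕ → Fin n}
variable {V : Type} [AddCommGroup V] [Module (LRose K n) V]
variable [Module K V] [IsScalarTower K (LRose K n) V]
variable (b : Module.Basis {β : ℕ → Fin n // TailEq n β α} K V)
variable (hactE : ∀ (i : Fin n) (β : {β : ℕ → Fin n // TailEq n β α})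
      (h : TailEq n (consSeq i β.1) α),
        ee K n i • b β = b ⟨consSeq i β.1, h⟩)
variable (hactG : ∀ (i : Fin n) (β : {β : ℕ → Fin n // TailEq n β α})
      (h0 : β.1 0 = i) (h : TailEq n (shiftSeq β.1) α),
        gg K n i • b β = b ⟨shiftSeq β.1, h⟩)
variable (hactG0 : ∀ (i : Fin n) (β : {β : ℕ → Fin n // TailEq n β α}),
      β.1 0 ≠ i → gg K n i • b β = 0)

include hactE hactG in
lemma actEps_match (m : ℕ) (β : ℕ → Fin n) (hβ : TailEq n β α)
    (hmatch : ∀ t, t < m → β t = α t) :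
    epsStd K n α m • b ⟨β, hβ⟩ = b ⟨β, hβ⟩ := by
  rw [epsStd, mul_smul]
  rw [actG_list b hactG (preL α m) β hβ
    (fun t ht => by rw [preL_get]; exact hmatch t (by simpa using ht))]
  rw [actE_list b hactE]
  congr 1
  apply Subtype.ext
  exact appendSeq_dropSeq (fun t ht => by
    rw [preL_get]; exact hmatch t (by simpa using ht))

include hactG hactG0 in
lemma actEps_ne (m : ℕ) (β : ℕ → Fin n) (hβ : TailEq n β α)
    (t : ℕ) (ht : t < m) (hne : β t ≠ α t) :
    epsStd K n α m • b ⟨β, hβ⟩ = 0 := by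
  rw [epsStd, mul_smul]
  rw [actG_list_ne b hactG hactG0 (preL α m) β hβ t (by simpa using ht)
    (by rw [preL_get]; exact hne)]
  rw [smul_zero]

end Action2

section Form
variable {K : Type} [Field K] {n : ℕ} {α : ℕ → Fin n}

lemma epsStd_zero : epsStd K n α 0 = 1 := by
  simp [epsStd, preL]

lemma gen_mem_NStd (m : ℕ) : epsStd K n α m - epsStd K n α (m + 1) ∈ NStd K n α :=
  Submodule.subset_span ⟨m, rfl⟩

lemma sub_mul_eps_mem (x : LRose K n) (m : ℕ) :
    x - x * epsStd K n α m ∈ NStd K n α := by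
  induction m with
  | zero => rw [epsStd_zero, mul_one, sub_self]; exact (NStd K n α).zero_mem
  | succ m ih =>
    have h2 : x * (epsStd K n α m - epsStd K n α (m + 1)) ∈ NStd K n α := by
      have := (NStd K n α).smul_mem x (gen_mem_NStd m)
      rwa [smul_eq_mul] at this
    have := (NStd K n α).add_mem ih h2
    rw [mul_sub, sub_add_sub_cancel] at this
    exact this

lemma preL_split (m m' : ℕ) (h : m ≤ m') :
    preL α m' = preL α m ++ ((List.range (m' - m)).map fun t => α (m + t)) := by
  have h2 : m + (m' - m) = m' := by omega
  conv_lhs => rw [← h2]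
  simp only [preL, List.range_add, List.map_append, List.map_map]
  rfl

lemma raise (c : List (Fin n) →₀ K) (m m' : ℕ) (h : m ≤ m') :
    ∃ c' : List (Fin n) →₀ K,
      (c.sum fun p k => k • EP K n p) * GP K n (preL α m)
        - (c'.sum fun p k => k • EP K n p) * GP K n (preL α m') ∈ NStd K n α := by
  set seg : List (Fin n) := (List.range (m' - m)).map fun t => α (m + t) with hseg
  refine ⟨c.mapDomain (· ++ seg), ?_⟩
  set X := (c.sum fun p k => k • EP K n p) * GP K n (preL α m) with hX
  have key : X * epsStd K n α m'
      = ((c.mapDomain (· ++ seg)).sum fun p k => k • EP K n p) * GP K n (preL α m') := by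
    have hGE : GP K n (preL α m) * EP K n (preL α m') = EP K n seg := by
      rw [preL_split m m' h, GP_mul_EP_prefix]
    rw [Finsupp.sum_mapDomain_index (fun p => by rw [zero_smul])
      (fun p k₁ k₂ => by rw [add_smul])]
    rw [hX, epsStd, mul_assoc, ← mul_assoc (GP K n (preL α m)), hGE, ← mul_assoc,
      Finsupp.sum, Finsupp.sum, Finset.sum_mul]
    congr 1
    apply Finset.sum_congr rfl
    intro p _
    rw [smul_mul_assoc, EP_append]
  rw [← key]
  exact sub_mul_eps_mem X m'

lemma form (x : LRose K n) : ∃ (m : ℕ) (c : List (Fin n) →₀ K),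
    x - (c.sum fun p k => k • EP K n p) * GP K n (preL α m) ∈ NStd K n α := by
  have hx := monSpan_eq_top K n x
  induction hx using Submodule.span_induction with
  | mem x hx =>
    obtain ⟨p, q, rfl⟩ := hx
    refine ⟨q.length, ?_⟩
    have hlen : (preL α q.length).length = q.length := preL_length α q.length
    rcases GP_mul_EP K n q (preL α q.length) with h0 | ⟨r, hr, he⟩ | ⟨r, hr, he⟩
    · -- x * eps = 0, so x ∈ N
      refine ⟨0, ?_⟩
      have h1 := sub_mul_eps_mem (α := α) (EP K n p * GP K n q) q.length
      have h2 : EP K n p * GP K n q * epsStd K n α q.length = 0 := by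
        rw [epsStd, mul_assoc, ← mul_assoc (GP K n q), h0, zero_mul, mul_zero]
      rw [h2, sub_zero] at h1
      simpa using h1
    · have hr0 : r = [] := by
        have := congrArg List.length hr
        simp at this
        exact this
      subst hr0
      refine ⟨Finsupp.single p 1, ?_⟩
      have h1 := sub_mul_eps_mem (α := α) (EP K n p * GP K n q) q.length
      have h2 : EP K n p * GP K n q * epsStd K n α q.length
          = EP K n p * GP K n (preL α q.length) := by
        rw [epsStd, mul_assoc, ← mul_assoc (GP K n q), he, EP_nil, one_mul]
      rw [h2] at h1
      rw [Finsupp.sum_single_index (by rw [zero_smul]), one_smul]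
      exact h1
    · have hr0 : r = [] := by
        have := congrArg List.length hr
        simp at this
        exact this
      subst hr0
      refine ⟨Finsupp.single p 1, ?_⟩
      have h1 := sub_mul_eps_mem (α := α) (EP K n p * GP K n q) q.length
      have h2 : EP K n p * GP K n q * epsStd K n α q.length
          = EP K n p * GP K n (preL α q.length) := by
        rw [epsStd, mul_assoc, ← mul_assoc (GP K n q), he, GP_nil, one_mul]
      rw [h2] at h1
      rw [Finsupp.sum_single_index (by rw [zero_smul]), one_smul]
      exact h1
  | zero =>
    exact ⟨0, 0, by simpa using (NStd K n α).zero_mem⟩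
  | add x y _ _ hx hy =>
    obtain ⟨m₁, c₁, h₁⟩ := hx
    obtain ⟨m₂, c₂, h₂⟩ := hy
    obtain ⟨c₁', h₁'⟩ := raise c₁ m₁ (max m₁ m₂) (le_max_left _ _)
    obtain ⟨c₂', h₂'⟩ := raise c₂ m₂ (max m₁ m₂) (le_max_right _ _)
    refine ⟨max m₁ m₂, c₁' + c₂', ?_⟩
    rw [Finsupp.sum_add_index' (fun p => by rw [zero_smul]) (fun p k₁ k₂ => by rw [add_smul])]
    have := (NStd K n α).add_mem ((NStd K n α).add_mem h₁ h₁')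
      ((NStd K n α).add_mem h₂ h₂')
    have e : x - (c₁.sum fun p k => k • EP K n p) * GP K n (preL α m₁)
        + ((c₁.sum fun p k => k • EP K n p) * GP K n (preL α m₁)
          - (c₁'.sum fun p k => k • EP K n p) * GP K n (preL α (max m₁ m₂)))
        + (y - (c₂.sum fun p k => k • EP K n p) * GP K n (preL α m₂)
        + ((c₂.sum fun p k => k • EP K n p) * GP K n (preL α m₂)
          - (c₂'.sum fun p k => k • EP K n p) * GP K n (preL α (max m₁ m₂))))
        = x + y - ((c₁'.sum fun p k => k • EP K n p)
            + (c₂'.sum fun p k => k • EP K n p)) * GP K n (preL α (max m₁ m₂)) := by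
      rw [add_mul]; abel
    rwa [e] at this
  | smul k x _ hx =>
    obtain ⟨m, c, h⟩ := hx
    refine ⟨m, k • c, ?_⟩
    have e1 : ((k • c).sum fun p k' => k' • EP K n p)
        = k • (c.sum fun p k' => k' • EP K n p) := by
      rw [Finsupp.sum_smul_index' (h := fun p k' => k' • EP K n p)
        (fun p => by simp)]
      rw [Finsupp.smul_sum]
      apply Finsupp.sum_congr
      intro p _
      rw [smul_assoc]
    rw [e1, smul_mul_assoc, ← smul_sub]
    rw [← algebraMap_smul (LRose K n) k]
    exact (NStd K n α).smul_mem _ h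

end Form

section Action3
variable {K : Type} [Field K] {n : ℕ} {α : ℕ → Fin n}
variable {V : Type} [AddCommGroup V] [Module (LRose K n) V]
variable [Module K V] [IsScalarTower K (LRose K n) V]
variable (b : Module.Basis {β : ℕ → Fin n // TailEq n β α} K V)
variable (hactE : ∀ (i : Fin n) (β : {β : ℕ → Fin n // TailEq n β α})
      (h : TailEq n (consSeq i β.1) α),
        ee K n i • b β = b ⟨consSeq i β.1, h⟩)
variable (hactG : ∀ (i : Fin n) (β : {β : ℕ → Fin n // TailEq n β α})
      (h0 : β.1 0 = i) (h : TailEq n (shiftSeq β.1) α),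
        gg K n i • b β = b ⟨shiftSeq β.1, h⟩)
variable (hactG0 : ∀ (i : Fin n) (β : {β : ℕ → Fin n // TailEq n β α}),
      β.1 0 ≠ i → gg K n i • b β = 0)

include hactG in
lemma actG_preL_self (β : ℕ → Fin n) (hβ : TailEq n β α) (m : ℕ)
    (hd : TailEq n (dropSeq m β) α) :
    GP K n (preL β m) • b ⟨β, hβ⟩ = b ⟨dropSeq m β, hd⟩ := by
  rw [actG_list b hactG (preL β m) β hβ (fun t ht => (preL_get β m t ht).symm)]
  congr 1
  apply Subtype.ext
  rw [preL_length]

include hactE hactG in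
lemma reach_to_v0 (β : ℕ → Fin n) (hβ : TailEq n β α) :
    ∃ a : LRose K n, a • b ⟨β, hβ⟩ = b ⟨α, tailEq_refl α⟩ := by
  obtain ⟨m, k, h⟩ := id hβ
  refine ⟨EP K n (preL α k) * GP K n (preL β m), ?_⟩
  rw [mul_smul, actG_preL_self b hactG β hβ m (tailEq_drop m hβ)]
  have hdd : (⟨dropSeq m β, tailEq_drop m hβ⟩ : {γ : ℕ → Fin n // TailEq n γ α})
      = ⟨dropSeq k α, tailEq_drop k (tailEq_refl α)⟩ := by
    apply Subtype.ext
    funext t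
    show β (t + m) = α (t + k)
    have e1 : t + m = m + t := by omega
    have e2 : t + k = k + t := by omega
    rw [e1, e2]; exact h t
  rw [hdd, actE_list b hactE (preL α k) (dropSeq k α) (tailEq_drop k (tailEq_refl α))]
  congr 1
  apply Subtype.ext
  exact appendSeq_preL_dropSeq α k

include hactE hactG in
lemma reach_from_v0 (β : ℕ → Fin n) (hβ : TailEq n β α) :
    ∃ a : LRose K n, a • b ⟨α, tailEq_refl α⟩ = b ⟨β, hβ⟩ := by
  obtain ⟨m, k, h⟩ := id hβ
  refine ⟨EP K n (preL β m) * GP K n (preL α k), ?_⟩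
  rw [mul_smul, actG_preL_self b hactG α (tailEq_refl α) k (tailEq_drop k (tailEq_refl α))]
  have hdd : (⟨dropSeq k α, tailEq_drop k (tailEq_refl α)⟩ : {γ : ℕ → Fin n // TailEq n γ α})
      = ⟨dropSeq m β, tailEq_drop m hβ⟩ := by
    apply Subtype.ext
    funext t
    show α (t + k) = β (t + m)
    have e1 : t + m = m + t := by omega
    have e2 : t + k = k + t := by omega
    rw [e1, e2]; exact (h t).symm
  rw [hdd, actE_list b hactE (preL β m) (dropSeq m β) (tailEq_drop m hβ)]
  congr 1
  apply Subtype.ext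
  have := appendSeq_dropSeq (β := β) (l := preL β m)
    (fun t ht => (preL_get β m t ht).symm)
  rw [preL_length] at this
  exact this

include hactE hactG in
lemma NStd_kills (x : LRose K n) (hx : x ∈ NStd K n α) :
    x • b ⟨α, tailEq_refl α⟩ = 0 := by
  induction hx using Submodule.span_induction with
  | mem y hy =>
    obtain ⟨m, rfl⟩ := hy
    rw [sub_smul,
      actEps_match b hactE hactG m α (tailEq_refl α) (fun _ _ => rfl),
      actEps_match b hactE hactG (m + 1) α (tailEq_refl α) (fun _ _ => rfl),
      sub_self]
  | zero => rw [zero_smul]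
  | add y z _ _ hy hz => rw [add_smul, hy, hz, add_zero]
  | smul r y _ hy => rw [smul_eq_mul, mul_smul, hy, smul_zero]

include hactE hactG in
lemma ker_sub_NStd (hirr : ¬ RationalSeq n α) (x : LRose K n)
    (hx : x • b ⟨α, tailEq_refl α⟩ = 0) : x ∈ NStd K n α := by
  obtain ⟨m, c, hN⟩ := form (α := α) x
  set v0 : V := b ⟨α, tailEq_refl α⟩ with hv0
  set S := (c.sum fun p k => k • EP K n p) * GP K n (preL α m) with hS
  set idx : List (Fin n) → {γ : ℕ → Fin n // TailEq n γ α} :=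
    fun p => ⟨appendSeq p (dropSeq m α),
      tailEq_appendSeq p (tailEq_drop m (tailEq_refl α))⟩ with hidx
  have hinj : ∀ p p', idx p = idx p' → p = p' := by
    intro p p' hpp
    exact appendSeq_inj hirr m (congrArg Subtype.val hpp)
  have hSv0 : S • v0 = c.sum fun p k => k • b (idx p) := by
    rw [hS, mul_smul, hv0, actG_preL_self b hactG α (tailEq_refl α) m
      (tailEq_drop m (tailEq_refl α)), Finsupp.sum, Finsupp.sum, Finset.sum_smul]
    apply Finset.sum_congr rfl
    intro p _
    rw [smul_assoc, actE_list b hactE p (dropSeq m α) (tailEq_drop m (tailEq_refl α))]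
  have hS0 : S • v0 = 0 := by
    have h1 : (x - S) • v0 = 0 := NStd_kills b hactE hactG _ hN
    have h2 : x • v0 = (x - S) • v0 + S • v0 := by rw [← add_smul, sub_add_cancel]
    rw [hx, h1, zero_add] at h2
    exact h2.symm
  have hc0 : c = 0 := by
    by_contra hc
    obtain ⟨p₀, hp₀⟩ := Finsupp.support_nonempty_iff.mpr hc
    have key := congrArg (fun v => (b.repr v) (idx p₀)) (hSv0.symm.trans hS0)
    simp only [map_zero, Finsupp.coe_zero, Pi.zero_apply] at key
    rw [map_finsuppSum, Finsupp.sum_apply] at key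
    have key2 : (c.sum fun p k => ((b.repr) (k • b (idx p))) (idx p₀)) = c p₀ := by
      rw [Finsupp.sum]
      rw [Finset.sum_eq_single p₀]
      · rw [map_smul, Module.Basis.repr_self, Finsupp.smul_apply, Finsupp.single_eq_same,
          smul_eq_mul, mul_one]
      · intro p hp hne
        rw [map_smul, Module.Basis.repr_self, Finsupp.smul_apply,
          Finsupp.single_eq_of_ne' (fun hh => hne (hinj p p₀ hh)), smul_zero]
      · intro hn
        exact absurd hp₀ hn
    rw [key2] at key
    exact (Finsupp.mem_support_iff.mp hp₀) key
  have hSz : S = 0 := by rw [hS, hc0]; simp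
  rw [hSz, sub_zero] at hN
  exact hN

end Action3

section Action4
variable {K : Type} [Field K] {n : ℕ} {α : ℕ → Fin n}
variable {V : Type} [AddCommGroup V] [Module (LRose K n) V]
variable [Module K V] [IsScalarTower K (LRose K n) V]
variable (b : Module.Basis {β : ℕ → Fin n // TailEq n β α} K V)
variable (hactE : ∀ (i : Fin n) (β : {β : ℕ → Fin n // TailEq n β α})
      (h : TailEq n (consSeq i β.1) α),
        ee K n i • b β = b ⟨consSeq i β.1, h⟩)
variable (hactG : ∀ (i : Fin n) (β : {β : ℕ → Fin n // TailEq n β α})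
      (h0 : β.1 0 = i) (h : TailEq n (shiftSeq β.1) α),
        gg K n i • b β = b ⟨shiftSeq β.1, h⟩)
variable (hactG0 : ∀ (i : Fin n) (β : {β : ℕ → Fin n // TailEq n β α}),
      β.1 0 ≠ i → gg K n i • b β = 0)

lemma smulC (k : K) (a : LRose K n) (v : V) : a • (k • v) = k • (a • v) := by
  rw [← algebraMap_smul (LRose K n) k v, ← mul_smul, ← Algebra.commutes, mul_smul,
    algebraMap_smul]

include hactE hactG hactG0 in
lemma reach_v0_of_ne (x : V) (hx : x ≠ 0) :
    ∃ a : LRose K n, a • x = b ⟨α, tailEq_refl α⟩ := by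
  classical
  set c := b.repr x with hc_def
  have hc : c ≠ 0 := fun h => hx (by
    have := congrArg b.repr.symm h
    simpa [hc_def] using this)
  obtain ⟨β₀, hβ₀⟩ := Finsupp.support_nonempty_iff.mpr hc
  set D : {γ : ℕ → Fin n // TailEq n γ α} → ℕ :=
    fun γ => if h : γ.1 = β₀.1 then 0 else Nat.find (Function.ne_iff.mp h) + 1 with hD
  set m := c.support.sup D with hm
  have hkill : ∀ γ : {γ : ℕ → Fin n // TailEq n γ α}, γ ∈ c.support → γ ≠ β₀ →
      GP K n (preL β₀.1 m) • b γ = 0 := by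
    intro γ hγ hγne
    have h : γ.1 ≠ β₀.1 := fun hh => hγne (Subtype.ext hh)
    have ht : γ.1 (Nat.find (Function.ne_iff.mp h)) ≠ β₀.1 (Nat.find (Function.ne_iff.mp h)) :=
      Nat.find_spec (Function.ne_iff.mp h)
    have htm : Nat.find (Function.ne_iff.mp h) < m := by
      have h1 : D γ ≤ m := Finset.le_sup hγ
      rw [hD] at h1
      simp only [dif_neg h] at h1
      omega
    have htm' : Nat.find (Function.ne_iff.mp h) < (preL β₀.1 m).length := by
      rw [preL_length]; exact htm
    have := actG_list_ne b hactG hactG0 (preL β₀.1 m) γ.1 γ.2 _ htm'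
      (by rw [preL_get]; exact ht)
    simpa using this
  have hx_sum : x = c.sum fun γ k => k • b γ := by
    conv_lhs => rw [← b.linearCombination_repr x]
    rw [Finsupp.linearCombination_apply]
  have hdrop : TailEq n (dropSeq m β₀.1) α := tailEq_drop m β₀.2
  have hGx : GP K n (preL β₀.1 m) • x = c β₀ • b ⟨dropSeq m β₀.1, hdrop⟩ := by
    conv_lhs => rw [hx_sum]
    rw [Finsupp.sum, Finset.smul_sum]
    rw [Finset.sum_eq_single β₀]
    · rw [smulC]
      congr 1
      have := actG_preL_self b hactG β₀.1 β₀.2 m hdrop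
      simpa using this
    · intro γ hγ hγne
      rw [smulC, hkill γ hγ hγne, smul_zero]
    · intro hn
      exact absurd hβ₀ hn
  obtain ⟨a₂, ha₂⟩ := reach_to_v0 b hactE hactG (dropSeq m β₀.1) hdrop
  have hcβ : c β₀ ≠ 0 := Finsupp.mem_support_iff.mp hβ₀
  refine ⟨a₂ * algebraMap K (LRose K n) (c β₀)⁻¹ * GP K n (preL β₀.1 m), ?_⟩
  rw [mul_smul, mul_smul, hGx, algebraMap_smul, smul_smul, inv_mul_cancel₀ hcβ, one_smul,
    ha₂]

end Action4


/-- Let `P ∈ GL_n(K)` and let `α` be an irrational infinite path in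
`R_n` in which every edge occurs infinitely often.  Let `V` be the Chen module
`V_{[α]}`: a `K`-vector space with basis the tail-equivalence class of `α`, with the
standard `L_K(R_n)`-action.  Then the twisted module `V^P_{[α]} = V^{φ_{P^{-1}}}` is
isomorphic to `L_K(R_n) / ⊕_{m≥0} L_K(R_n)(φ_P(ε_m) − φ_P(ε_{m+1}))`, and it is a
simple left `L_K(R_n)`-module which is not finitely presented. -/
theorem stmt18 (K : Type) [Field K] (n : ℕ) (hn : 2 ≤ n)
    (α : ℕ → Fin n) (hirr : ¬ RationalSeq n α) (hrich : EdgeRich n α)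
    (P : GL (Fin n) K)
    (φP φPinv : LRose K n →ₐ[K] LRose K n)
    (hφP : RPhiProps K n
      ((P : Matrix (Fin n) (Fin n) K).map (algebraMap K (LRose K n)))
      ((((P⁻¹ : GL (Fin n) K) : Matrix (Fin n) (Fin n) K)).map (algebraMap K (LRose K n))) φP)
    (hφPinv : RPhiProps K n
      ((((P⁻¹ : GL (Fin n) K) : Matrix (Fin n) (Fin n) K)).map (algebraMap K (LRose K n)))
      ((P : Matrix (Fin n) (Fin n) K).map (algebraMap K (LRose K n))) φPinv)
    (hinv : ∀ x, φP (φPinv x) = x ∧ φPinv (φP x) = x)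
    -- the Chen module `V_{[α]}`:
    (V : Type) [AddCommGroup V] [Module (LRose K n) V]
    [Module K V] [IsScalarTower K (LRose K n) V]
    (b : Module.Basis {β : ℕ → Fin n // TailEq n β α} K V)
    (hactE : ∀ (i : Fin n) (β : {β : ℕ → Fin n // TailEq n β α})
      (h : TailEq n (consSeq i β.1) α),
        ee K n i • b β = b ⟨consSeq i β.1, h⟩)
    (hactG : ∀ (i : Fin n) (β : {β : ℕ → Fin n // TailEq n β α})
      (h0 : β.1 0 = i) (h : TailEq n (shiftSeq β.1) α),
        gg K n i • b β = b ⟨shiftSeq β.1, h⟩)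
    (hactG0 : ∀ (i : Fin n) (β : {β : ℕ → Fin n // TailEq n β α}),
      β.1 0 ≠ i → gg K n i • b β = 0) :
    -- the elements `ε_m = e_{i_1} ⋯ e_{i_m} e_{i_m}* ⋯ e_{i_1}*` (`ε_0 = v = 1`)
    ∀ eps : ℕ → LRose K n,
      (∀ m : ℕ, eps m =
        ((List.range m).map fun t => ee K n (α t)).prod *
          ((List.range m).reverse.map fun t => gg K n (α t)).prod) →
    ∀ N : Submodule (LRose K n) (LRose K n),
      N = Submodule.span (LRose K n)
        {x : LRose K n | ∃ m : ℕ, x = φP (eps m) - φP (eps (m + 1))} →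
      (∃ f : V →+ (LRose K n ⧸ N),
        Function.Bijective f ∧
        ∀ (a : LRose K n) (x : V), f (a • x) = φP a • f x) ∧
      IsSimpleModule (LRose K n) (LRose K n ⧸ N) ∧
      ¬ Module.FinitePresentation (LRose K n) (LRose K n ⧸ N) := by
  intro eps heps N hN
  classical
  have heps' : ∀ m, eps m = epsStd K n α m := by
    intro m
    rw [heps m]
    simp [epsStd, EP, GP, preL, List.map_map, List.map_reverse, Function.comp_def]
  set v0 : V := b ⟨α, tailEq_refl α⟩ with hv0def
  have hv0ne : v0 ≠ 0 := Module.Basis.ne_zero b _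
  -- transfer between N and NStd
  have hPinvN : ∀ x ∈ N, φPinv x ∈ NStd K n α := by
    intro x hx
    rw [hN] at hx
    induction hx using Submodule.span_induction with
    | mem y hy =>
      obtain ⟨m, rfl⟩ := hy
      rw [map_sub, (hinv _).2, (hinv _).2, heps', heps']
      exact gen_mem_NStd m
    | zero => rw [map_zero]; exact Submodule.zero_mem _
    | add y z _ _ hy hz => rw [map_add]; exact Submodule.add_mem _ hy hz
    | smul r y _ hy =>
      rw [smul_eq_mul, map_mul]
      have := (NStd K n α).smul_mem (φPinv r) hy
      rwa [smul_eq_mul] at this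
  have hPN0 : ∀ x ∈ NStd K n α, φP x ∈ N := by
    intro x hx
    induction hx using Submodule.span_induction with
    | mem y hy =>
      obtain ⟨m, rfl⟩ := hy
      rw [map_sub, ← heps', ← heps', hN]
      exact Submodule.subset_span ⟨m, rfl⟩
    | zero => rw [map_zero]; exact Submodule.zero_mem _
    | add y z _ _ hy hz => rw [map_add]; exact Submodule.add_mem _ hy hz
    | smul r y _ hy =>
      rw [smul_eq_mul, map_mul]
      have := N.smul_mem (φP r) hy
      rwa [smul_eq_mul] at this
  -- the map p
  set p : LRose K n → V := fun a => φPinv a • v0 with hp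
  have hp_sub : ∀ a a', p (a - a') = p a - p a' := by
    intro a a'; simp only [hp, map_sub, sub_smul]
  have hp_add : ∀ a a', p (a + a') = p a + p a' := by
    intro a a'; simp only [hp, map_add, add_smul]
  have hp_one : p 1 = v0 := by simp only [hp, map_one, one_smul]
  have hp_ker : ∀ a, p a = 0 ↔ a ∈ N := by
    intro a
    constructor
    · intro h
      have h2 : φPinv a ∈ NStd K n α :=
        ker_sub_NStd b hactE hactG hirr (φPinv a) (by rw [← hv0def]; exact h)
      have h3 := hPN0 _ h2
      rwa [(hinv a).1] at h3
    · intro h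
      have := NStd_kills b hactE hactG (φPinv a) (hPinvN a h)
      rw [← hv0def] at this
      exact this
  have horb : ∀ x : V, ∃ a : LRose K n, a • v0 = x := by
    intro x
    have hxmem : x ∈ Submodule.span (LRose K n) {v0} := by
      have hx_sum := b.linearCombination_repr x
      rw [Finsupp.linearCombination_apply] at hx_sum
      rw [← hx_sum]
      apply Submodule.sum_mem
      intro γ _
      obtain ⟨a, ha⟩ := reach_from_v0 b hactE hactG γ.1 γ.2
      have hbγ : b γ ∈ Submodule.span (LRose K n) {v0} := by
        rw [show b γ = a • v0 from by rw [hv0def, ha]]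
        exact Submodule.smul_mem _ a (Submodule.mem_span_singleton_self v0)
      show (b.repr x) γ • b γ ∈ Submodule.span (LRose K n) {v0}
      rw [← algebraMap_smul (LRose K n) ((b.repr x) γ) (b γ)]
      exact Submodule.smul_mem _ _ hbγ
    exact Submodule.mem_span_singleton.mp hxmem
  have hp_surj : ∀ x : V, ∃ a, p a = x := by
    intro x
    obtain ⟨a, ha⟩ := horb x
    exact ⟨φP a, by simp only [hp]; rw [(hinv a).2]; exact ha⟩
  choose g hg using hp_surj
  have hq_of_p : ∀ a a', p a = p a' →
      (Submodule.Quotient.mk a : LRose K n ⧸ N) = Submodule.Quotient.mk a' := by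
    intro a a' h
    rw [Submodule.Quotient.eq]
    apply (hp_ker _).mp
    rw [hp_sub, h, sub_self]
  refine ⟨⟨AddMonoidHom.mk' (fun x => Submodule.Quotient.mk (g x)) ?_, ?_, ?_⟩, ?_, ?_⟩
  · -- additivity
    intro x y
    show (Submodule.Quotient.mk (g (x + y)) : LRose K n ⧸ N)
      = Submodule.Quotient.mk (g x) + Submodule.Quotient.mk (g y)
    have h1 : p (g (x + y)) = p (g x + g y) := by rw [hp_add, hg, hg, hg]
    rw [hq_of_p _ _ h1, Submodule.Quotient.mk_add]
  · -- bijective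
    constructor
    · intro x y hxy
      simp only [AddMonoidHom.mk'_apply] at hxy
      have h1 : g x - g y ∈ N := (Submodule.Quotient.eq N).mp hxy
      have h2 : p (g x - g y) = 0 := (hp_ker _).mpr h1
      rw [hp_sub, hg, hg] at h2
      exact sub_eq_zero.mp h2
    · intro z
      obtain ⟨a, rfl⟩ := Submodule.Quotient.mk_surjective N z
      refine ⟨p a, ?_⟩
      simp only [AddMonoidHom.mk'_apply]
      exact hq_of_p _ _ (hg (p a))
  · -- equivariance
    intro a x
    simp only [AddMonoidHom.mk'_apply]
    have h1 : p (g (a • x)) = p (φP a * g x) := by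
      rw [hg]
      simp only [hp]
      rw [map_mul, (hinv a).2, mul_smul]
      have : φPinv (g x) • v0 = x := hg x
      rw [this]
    rw [hq_of_p _ _ h1]
    rw [show (Submodule.Quotient.mk (φP a * g x) : LRose K n ⧸ N)
      = φP a • Submodule.Quotient.mk (g x) from by
        rw [← Submodule.Quotient.mk_smul N (φP a) (g x), smul_eq_mul]]
  · -- simplicity
    have hone : (Submodule.Quotient.mk 1 : LRose K n ⧸ N) ≠ 0 := by
      intro h
      have h1 : (1 : LRose K n) ∈ N := (Submodule.Quotient.mk_eq_zero N).mp h
      have h2 := (hp_ker 1).mpr h1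
      rw [hp_one] at h2
      exact hv0ne h2
    have hbt : (⊥ : Submodule (LRose K n) (LRose K n ⧸ N)) ≠ ⊤ := by
      intro h
      have : (Submodule.Quotient.mk 1 : LRose K n ⧸ N) ∈
          (⊥ : Submodule (LRose K n) (LRose K n ⧸ N)) := h ▸ Submodule.mem_top
      rw [Submodule.mem_bot] at this
      exact hone this
    haveI : Nontrivial (Submodule (LRose K n) (LRose K n ⧸ N)) := ⟨⊥, ⊤, hbt⟩
    refine (isSimpleModule_iff (R := LRose K n) (M := LRose K n ⧸ N)).mpr ⟨fun S => ?_⟩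
    by_cases hS : S = ⊥
    · left; exact hS
    right
    obtain ⟨y, hyS, hy0⟩ := (Submodule.ne_bot_iff S).mp hS
    obtain ⟨a, rfl⟩ := Submodule.Quotient.mk_surjective N y
    have hpa : p a ≠ 0 := by
      intro h
      exact hy0 ((Submodule.Quotient.mk_eq_zero N).mpr ((hp_ker a).mp h))
    obtain ⟨s, hs⟩ := reach_v0_of_ne b hactE hactG hactG0 (p a) hpa
    rw [← hv0def] at hs
    have h1 : p (φP s * a) = p 1 := by
      simp only [hp]
      rw [map_mul, (hinv s).2, mul_smul, map_one, one_smul]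
      exact hs
    have h2 : (Submodule.Quotient.mk 1 : LRose K n ⧸ N) ∈ S := by
      rw [← hq_of_p _ _ h1]
      rw [show (Submodule.Quotient.mk (φP s * a) : LRose K n ⧸ N)
        = φP s • Submodule.Quotient.mk a from by
          rw [← Submodule.Quotient.mk_smul N (φP s) a, smul_eq_mul]]
      exact S.smul_mem _ hyS
    rw [Submodule.eq_top_iff']
    intro z
    obtain ⟨cz, rfl⟩ := Submodule.Quotient.mk_surjective N z
    rw [show (Submodule.Quotient.mk cz : LRose K n ⧸ N)
      = cz • Submodule.Quotient.mk 1 from by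
        rw [← Submodule.Quotient.mk_smul N cz 1, smul_eq_mul, mul_one]]
    exact S.smul_mem _ h2
  · -- not finitely presented
    intro hFP
    haveI := hFP
    have hfg : N.FG := by
      have h := Module.FinitePresentation.fg_ker (R := LRose K n) N.mkQ
        (Submodule.mkQ_surjective N)
      rwa [Submodule.ker_mkQ] at h
    set F : ℕ → Submodule (LRose K n) (LRose K n) :=
      fun M => Submodule.span (LRose K n)
        {x | ∃ m, m < M ∧ x = φP (eps m) - φP (eps (m + 1))} with hF
    have hFmono : Monotone F := by
      intro M M' hMM
      apply Submodule.span_mono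
      rintro x ⟨m, hm, hx⟩
      exact ⟨m, lt_of_lt_of_le hm hMM, hx⟩
    have hFleN : ∀ M, F M ≤ N := by
      intro M
      rw [hF, hN]
      apply Submodule.span_le.mpr
      rintro x ⟨m, -, rfl⟩
      exact Submodule.subset_span ⟨m, rfl⟩
    have hNsup : N = ⨆ M, F M := by
      apply le_antisymm
      · rw [hN]
        apply Submodule.span_le.mpr
        rintro x ⟨m, rfl⟩
        exact le_iSup F (m + 1) (Submodule.subset_span ⟨m, Nat.lt_succ_self m, rfl⟩)
      · exact iSup_le hFleN
    obtain ⟨T, hT⟩ := hfg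
    have hTM : ∃ M₀, ∀ t ∈ T, t ∈ F M₀ := by
      have key : ∀ s : Finset (LRose K n), (∀ t ∈ s, t ∈ N) → ∃ M₀, ∀ t ∈ s, t ∈ F M₀ := by
        intro s
        induction s using Finset.induction_on with
        | empty => exact fun _ => ⟨0, fun t ht => absurd ht (Finset.notMem_empty t)⟩
        | insert t₀ s' hnotmem ih =>
          intro hsub
          obtain ⟨M₁, hM₁⟩ := ih (fun t ht => hsub t (Finset.mem_insert_of_mem ht))
          have ht₀N : t₀ ∈ N := hsub t₀ (Finset.mem_insert_self t₀ s')
          rw [hNsup] at ht₀N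
          obtain ⟨M₂, hM₂⟩ := (Submodule.mem_iSup_of_directed F hFmono.directed_le).mp ht₀N
          refine ⟨max M₁ M₂, fun t ht => ?_⟩
          rcases Finset.mem_insert.mp ht with rfl | ht'
          · exact hFmono (le_max_right M₁ M₂) hM₂
          · exact hFmono (le_max_left M₁ M₂) (hM₁ t ht')
      apply key
      intro t ht
      rw [← hT]
      exact Submodule.subset_span ht
    obtain ⟨M₀, hM₀⟩ := hTM
    have hNle : N ≤ F M₀ := by
      rw [← hT]
      apply Submodule.span_le.mpr
      intro t ht
      exact hM₀ t ht
    have hgenF : φP (eps M₀) - φP (eps (M₀ + 1)) ∈ F M₀ := by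
      apply hNle
      rw [hN]
      exact Submodule.subset_span ⟨M₀, rfl⟩
    -- construct the path β differing from α exactly at position M₀
    haveI : Nontrivial (Fin n) := ⟨⟨0, by omega⟩, ⟨1, by omega⟩, by simp [Fin.ext_iff]⟩
    obtain ⟨j, hj⟩ := exists_ne (α M₀)
    set β : ℕ → Fin n := fun t => if t = M₀ then j else α t with hβdef
    have hβtail : TailEq n β α := by
      refine ⟨M₀ + 1, M₀ + 1, fun t => ?_⟩
      have hne : M₀ + 1 + t ≠ M₀ := by omega
      simp [hβdef, hne]
    have hwm : ∀ m, m ≤ M₀ → epsStd K n α m • b ⟨β, hβtail⟩ = b ⟨β, hβtail⟩ := by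
      intro m hm
      apply actEps_match b hactE hactG m β hβtail
      intro t ht
      have hne : t ≠ M₀ := by omega
      simp [hβdef, hne]
    have hwM : epsStd K n α (M₀ + 1) • b ⟨β, hβtail⟩ = 0 := by
      apply actEps_ne b hactG hactG0 (M₀ + 1) β hβtail M₀ (Nat.lt_succ_self _)
      simp [hβdef, hj]
    have hkillF : ∀ x ∈ F M₀, φPinv x • b ⟨β, hβtail⟩ = 0 := by
      intro x hx
      induction hx using Submodule.span_induction with
      | mem y hy =>
        obtain ⟨m, hm, rfl⟩ := hy
        rw [map_sub, (hinv _).2, (hinv _).2, heps', heps', sub_smul,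
          hwm m (by omega), hwm (m + 1) (by omega), sub_self]
      | zero => rw [map_zero, zero_smul]
      | add y z _ _ hy hz => rw [map_add, add_smul, hy, hz, add_zero]
      | smul r y _ hy => rw [smul_eq_mul, map_mul, mul_smul, hy, smul_zero]
    have hcontr := hkillF _ hgenF
    rw [map_sub, (hinv _).2, (hinv _).2, heps', heps', sub_smul,
      hwm M₀ le_rfl, hwM, sub_zero] at hcontr
    exact Module.Basis.ne_zero b ⟨β, hβtail⟩ hcontr
end Span
end
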